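/- arXiv:2007.11131 — 13 statements merged into one kernel-verified Lean document; each statement's English description precedes it below -/
import Mathlib

section
/- Let V be a finite set, E ⊆ V × V an acyclic relation, and B ∈ ℝ^{V×V} supported on E. If u ∉ An(v) (i.e., u ≠ v and there is no directed path in E from u to v), then [(I − B)^{-1}]_{vu} = 0. -/
open Matrix

/-- For `B` supported on an acyclic relation, if `u ∉ An(v)`
(i.e. `u ≠ v` and there is no directed path from `u` to `v`, the latter being
equivalent to `¬ Relation.TransGen r u v`), then `[(I − B)⁻¹]_{vu} = 0`. -/
theorem stmt_2 {V : Type*} [Fintype V] [DecidableEq V]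
    (r : V → V → Prop) (hacyc : ∀ v : V, ¬ Relation.TransGen r v v)
    (B : Matrix V V ℝ) (hsupp : ∀ u v : V, B v u ≠ 0 → r u v)
    (u v : V) (hne : u ≠ v) (hnan : ¬ Relation.TransGen r u v) :
    (1 - B)⁻¹ v u = 0 := by
  by_cases hdet : IsUnit (1 - B).det
  · set C := (1 - B)⁻¹ with hCdef
    have hmul : (1 - B) * C = 1 := Matrix.mul_nonsing_inv _ hdet
    set T := Relation.TransGen r with hT
    have htrans : Transitive T := fun a b c => Relation.TransGen.trans
    have hwf : WellFounded T := by
      haveI : IsTrans V T := ⟨fun a b c => Relation.TransGen.trans⟩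
      haveI : IsIrrefl V T := ⟨hacyc⟩
      exact Finite.wellFounded_of_trans_of_irrefl T
    revert hne hnan
    induction v using hwf.induction with
    | _ v IH =>
      intro hne hnan
      have key : C v u - ∑ w, B v w * C w u = 0 := by
        have := congrFun (congrFun hmul v) u
        simp only [Matrix.mul_apply, Matrix.sub_apply, Matrix.one_apply,
          sub_mul, Finset.sum_sub_distrib] at this ⊢
        rw [if_neg (Ne.symm hne)] at this
        rw [← this]
        congr 1
        rw [Finset.sum_eq_single v]
        · simp
        · intro b _ hb; rw [if_neg (Ne.symm hb), zero_mul]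
        · simp
      have hsum : ∑ w, B v w * C w u = 0 := by
        apply Finset.sum_eq_zero
        intro w _
        by_cases hB : B v w = 0
        · simp [hB]
        · have hrw : r w v := hsupp w v hB
          have hTwv : T w v := Relation.TransGen.single hrw
          have hwne : w ≠ u := by
            rintro rfl; exact hnan hTwv
          have hnw : ¬ T u w := fun h => hnan (h.trans hTwv)
          rw [IH w hTwv hwne.symm hnw, mul_zero]
      rw [hsum] at key
      simpa using key
  · rw [Matrix.nonsing_inv_apply_not_isUnit _ hdet]
    simp
end

section
/- Let G = (V, E) be a finite directed acyclic graph and let u, v ∈ V with u ∈ an(v). For β ∈ ℝ^E define B(β) ∈ ℝ^{V×V} by B(β)_{wz} = β_{(z,w)} if (z,w) ∈ E and 0 otherwise. Then the set {β ∈ ℝ^E : [(I − B(β))^{-1}]_{vu} = 0} has Lebesgue measure zero in ℝ^E. -/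
open Matrix MeasureTheory

/-- The matrix `B(β)` with `B(β)_{wz} = β_{(z,w)}` if `(z,w) ∈ E` and `0` otherwise. -/
noncomputable def edgeMatrix {V : Type*} [DecidableEq V] (E : Finset (V × V))
    (β : ↥E → ℝ) : Matrix V V ℝ :=
  fun w z => if h : (z, w) ∈ E then β ⟨(z, w), h⟩ else 0


lemma measurable_mveval {σ : Type*} (p : MvPolynomial σ ℝ) :
    Measurable fun x : σ → ℝ => MvPolynomial.eval x p := by
  induction p using MvPolynomial.induction_on with
  | C a => simpa using measurable_const
  | add p q hp hq => simp; exact hp.add hq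
  | mul_X p i hp => simp; exact hp.mul (measurable_pi_apply i)

lemma mv_zero_set_fin : ∀ (n : ℕ) (p : MvPolynomial (Fin n) ℝ), p ≠ 0 →
    volume {x : Fin n → ℝ | MvPolynomial.eval x p = 0} = 0 := by
  intro n
  induction n with
  | zero =>
    intro p hp
    obtain ⟨a, rfl⟩ := MvPolynomial.C_surjective (Fin 0) p
    have ha : a ≠ 0 := fun h => hp (by simp [h])
    have : {x : Fin 0 → ℝ | MvPolynomial.eval x (MvPolynomial.C a) = 0} = ∅ := by
      ext x; simp [ha]
    rw [this]
    simp
  | succ n ih =>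
    intro p hp
    set q : Polynomial (MvPolynomial (Fin n) ℝ) := MvPolynomial.finSuccEquiv ℝ n p with hq
    have hq0 : q ≠ 0 := by
      simp only [hq]
      exact fun h => hp ((map_eq_zero_iff _ (MvPolynomial.finSuccEquiv ℝ n).injective).mp h)
    obtain ⟨m, hm⟩ : ∃ m, q.coeff m ≠ 0 := by
      by_contra h
      push_neg at h
      exact hq0 (Polynomial.ext fun m => by simp [h m])
    -- the set in product form
    set S' : Set ((Fin n → ℝ) × ℝ) :=
      {st | MvPolynomial.eval (Fin.cons st.2 st.1) p = 0} with hS'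
    have hmeasS' : MeasurableSet S' := by
      have hcons : Measurable fun st : (Fin n → ℝ) × ℝ => (Fin.cons st.2 st.1 : Fin (n+1) → ℝ) := by
        apply measurable_pi_lambda
        intro j
        induction j using Fin.cases with
        | zero => simpa using measurable_snd
        | succ k => simp; exact (measurable_pi_apply k).comp measurable_fst
      exact ((measurable_mveval p).comp hcons) (measurableSet_singleton 0)
    have hS'0 : (volume : Measure ((Fin n → ℝ) × ℝ)) S' = 0 := by
      rw [show (volume : Measure ((Fin n → ℝ) × ℝ)) =
        (volume : Measure (Fin n → ℝ)).prod (volume : Measure ℝ) from rfl]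
      rw [Measure.measure_prod_null hmeasS']
      have hae : ∀ᵐ s : Fin n → ℝ, MvPolynomial.eval s (q.coeff m) ≠ 0 := by
        have := ih (q.coeff m) hm
        rw [ae_iff]
        simpa using this
      filter_upwards [hae] with s hs
      have hQ : (q.map (MvPolynomial.eval s)) ≠ 0 := by
        intro h
        apply hs
        have := congrArg (fun r => Polynomial.coeff r m) h
        simpa [Polynomial.coeff_map] using this
      have : (Prod.mk s ⁻¹' S') = {t : ℝ | Polynomial.IsRoot (q.map (MvPolynomial.eval s)) t} := by
        ext t
        simp only [hS', Set.mem_preimage, Set.mem_setOf_eq, Polynomial.IsRoot]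
        rw [MvPolynomial.eval_eq_eval_mv_eval']
      rw [this]
      exact (Polynomial.finite_setOf_isRoot hQ).measure_zero _
    -- transfer back via measure preserving equiv
    have hT := (measurePreserving_piFinSuccAbove (fun _ : Fin (n+1) => (volume : Measure ℝ)) 0)
    set T := MeasurableEquiv.piFinSuccAbove (fun _ : Fin (n+1) => ℝ) 0
    have hswap : MeasurePreserving (Prod.swap : ℝ × (Fin n → ℝ) → (Fin n → ℝ) × ℝ)
        ((volume : Measure ℝ).prod volume) (volume.prod volume) :=
      Measure.measurePreserving_swap
    have hTP : MeasurePreserving (fun x : Fin (n+1) → ℝ => Prod.swap (T x))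
        (volume : Measure (Fin (n+1) → ℝ)) (volume.prod volume) := by
      have : (volume : Measure (Fin (n+1) → ℝ)) = Measure.pi fun _ => volume := rfl
      rw [this]
      exact hswap.comp hT
    have hpre : {x : Fin (n+1) → ℝ | MvPolynomial.eval x p = 0} =
        (fun x : Fin (n+1) → ℝ => Prod.swap (T x)) ⁻¹' S' := by
      ext x
      simp only [Set.mem_setOf_eq, Set.mem_preimage, hS']
      have hx : (Fin.cons (Prod.swap (T x)).2 (Prod.swap (T x)).1 : Fin (n+1) → ℝ) = x := by
        ext j
        induction j using Fin.cases with
        | zero => simp [T, MeasurableEquiv.piFinSuccAbove]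
        | succ k => simp [T, MeasurableEquiv.piFinSuccAbove, Fin.succAbove_zero, Fin.tail]
      rw [hx]
    rw [hpre]
    rw [hTP.measure_preimage hmeasS'.nullMeasurableSet]
    · exact hS'0

lemma mv_zero_set {σ : Type*} [Fintype σ] (p : MvPolynomial σ ℝ) (hp : p ≠ 0) :
    volume {x : σ → ℝ | MvPolynomial.eval x p = 0} = 0 := by
  classical
  obtain ⟨e⟩ : Nonempty (σ ≃ Fin (Fintype.card σ)) := ⟨Fintype.equivFin σ⟩
  set q : MvPolynomial (Fin (Fintype.card σ)) ℝ := MvPolynomial.rename e p with hqdef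
  have hq : q ≠ 0 := fun h => hp ((MvPolynomial.rename_injective e e.injective) (by simpa using h))
  have hmeas : MeasurableSet {y : Fin (Fintype.card σ) → ℝ | MvPolynomial.eval y q = 0} :=
    (measurable_mveval q) (measurableSet_singleton 0)
  have hMP := volume_measurePreserving_piCongrLeft (fun _ : Fin (Fintype.card σ) => ℝ) e
  have hpre : {x : σ → ℝ | MvPolynomial.eval x p = 0} =
      (MeasurableEquiv.piCongrLeft (fun _ => ℝ) e) ⁻¹'
        {y : Fin (Fintype.card σ) → ℝ | MvPolynomial.eval y q = 0} := by
    ext x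
    simp only [Set.mem_setOf_eq, Set.mem_preimage, hqdef, MvPolynomial.eval_rename]
    have : (⇑(MeasurableEquiv.piCongrLeft (fun _ => ℝ) e) x) ∘ ⇑e = x := by
      funext a
      simp [MeasurableEquiv.piCongrLeft, Equiv.piCongrLeft]
    rw [this]
  rw [hpre, hMP.measure_preimage hmeas.nullMeasurableSet]
  exact mv_zero_set_fin _ q hq

section chains
variable {V : Type*} [Fintype V] [DecidableEq V]

lemma pow_chain (E : Finset (V × V)) (B : Matrix V V ℝ)
    (hsupp : ∀ w z, (z, w) ∉ E → B w z = 0) :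
    ∀ (k : ℕ) (w z : V), (B ^ k) w z ≠ 0 →
      ∃ f : Fin (k + 1) → V, f 0 = z ∧ f (Fin.last k) = w ∧
        ∀ i : Fin k, (f i.castSucc, f i.succ) ∈ E := by
  intro k
  induction k with
  | zero =>
    intro w z h
    have hwz : w = z := by
      by_contra hne
      rw [pow_zero, Matrix.one_apply_ne hne] at h
      exact h rfl
    exact ⟨fun _ => z, rfl, hwz ▸ rfl, fun i => i.elim0⟩
  | succ k ih =>
    intro w z h
    rw [pow_succ, Matrix.mul_apply] at h
    obtain ⟨y, -, hy⟩ := Finset.exists_ne_zero_of_sum_ne_zero h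
    have hBk : (B ^ k) w y ≠ 0 := left_ne_zero_of_mul hy
    have hByz : B y z ≠ 0 := right_ne_zero_of_mul hy
    have hedge : (z, y) ∈ E := by
      by_contra hne
      exact hByz (hsupp y z hne)
    obtain ⟨g, hg0, hglast, hgedge⟩ := ih w y hBk
    refine ⟨Fin.cons z g, Fin.cons_zero _ _, ?_, ?_⟩
    · rw [← Fin.succ_last, Fin.cons_succ, hglast]
    · intro i
      induction i using Fin.cases with
      | zero =>
        have h1 : (Fin.cons z g : Fin (k+2) → V) (0 : Fin (k+1)).castSucc = z := by
          simp
        have h2 : (Fin.cons z g : Fin (k+2) → V) (0 : Fin (k+1)).succ = y := by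
          rw [Fin.cons_succ, hg0]
        rw [h1, h2]; exact hedge
      | succ j =>
        have h1 : (Fin.cons z g : Fin (k+2) → V) (j.succ).castSucc = g j.castSucc := by
          rw [← Fin.succ_castSucc, Fin.cons_succ]
        have h2 : (Fin.cons z g : Fin (k+2) → V) (j.succ).succ = g j.succ := by
          rw [Fin.cons_succ]
        rw [h1, h2]; exact hgedge j

lemma transGen_of_chain {k : ℕ} {R : V → V → Prop} (f : Fin (k + 1) → V)
    (hf : ∀ i : Fin k, R (f i.castSucc) (f i.succ)) :
    ∀ i j : Fin (k + 1), i < j → Relation.TransGen R (f i) (f j) := by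
  intro i j
  induction j using Fin.induction with
  | zero => intro h; exact absurd h (Fin.not_lt_zero i)
  | succ j ihj =>
    intro hij
    have hle : i ≤ j.castSucc := by
      simp only [Fin.lt_iff_val_lt_val, Fin.val_succ] at hij
      simp only [Fin.le_iff_val_le_val, Fin.coe_castSucc]
      omega
    rcases eq_or_lt_of_le hle with heq | hlt
    · rw [heq]
      exact Relation.TransGen.single (hf j)
    · exact (ihj hlt).tail (hf j)

lemma pow_eq_zero_of_acyclic (E : Finset (V × V))
    (hacyc : ∀ v : V, ¬ Relation.TransGen (fun a b => (a, b) ∈ E) v v)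
    (B : Matrix V V ℝ) (hsupp : ∀ w z, (z, w) ∉ E → B w z = 0) :
    B ^ (Fintype.card V) = 0 := by
  ext w z
  by_contra h
  obtain ⟨f, -, -, hfe⟩ := pow_chain E B hsupp (Fintype.card V) w z h
  have hninj : ¬ Function.Injective f := by
    intro hinj
    have := Fintype.card_le_of_injective f hinj
    simp at this
  rw [Function.not_injective_iff] at hninj
  obtain ⟨i, j, hij, hne⟩ := hninj
  rcases Fin.lt_or_lt_of_ne hne with hlt | hlt
  · have := transGen_of_chain (R := fun a b => (a, b) ∈ E) f hfe i j hlt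
    rw [hij] at this
    exact hacyc (f j) this
  · have := transGen_of_chain (R := fun a b => (a, b) ∈ E) f hfe j i hlt
    rw [hij] at this
    exact hacyc (f j) this
end chains
section pos
variable {V : Type*} [Fintype V] [DecidableEq V] (E : Finset (V × V))

lemma ones_nonneg : ∀ (k : ℕ) (w z : V), 0 ≤ ((edgeMatrix E fun _ => 1) ^ k) w z := by
  intro k
  induction k with
  | zero =>
    intro w z
    rw [pow_zero]
    by_cases h : w = z
    · subst h; simp
    · rw [Matrix.one_apply_ne h]
  | succ k ih =>
    intro w z
    rw [pow_succ, Matrix.mul_apply]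
    refine Finset.sum_nonneg fun y _ => mul_nonneg (ih w y) ?_
    unfold edgeMatrix
    split <;> norm_num

lemma ones_pos (u v : V) (hu : Relation.TransGen (fun a b => (a, b) ∈ E) u v) :
    ∃ k : ℕ, 0 < ((edgeMatrix E fun _ => 1) ^ (k + 1)) v u := by
  induction hu using Relation.TransGen.head_induction_on with
  | single h =>
    refine ⟨0, ?_⟩
    rw [pow_one]
    unfold edgeMatrix
    rw [dif_pos h]
    norm_num
  | head h htrans ihc =>
    rename_i a c
    obtain ⟨k, hk⟩ := ihc
    refine ⟨k + 1, ?_⟩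
    rw [pow_succ, Matrix.mul_apply]
    have hterm : 0 < ((edgeMatrix E fun _ => 1) ^ (k + 1)) v c *
        (edgeMatrix E fun _ => 1) c a := by
      have : (edgeMatrix E fun _ => 1) c a = 1 := by
        unfold edgeMatrix; rw [dif_pos h]
      rw [this, mul_one]; exact hk
    calc (0:ℝ) < _ := hterm
      _ ≤ _ := Finset.single_le_sum (f := fun y => ((edgeMatrix E fun _ => 1) ^ (k+1)) v y *
          (edgeMatrix E fun _ => 1) y a)
          (fun y _ => mul_nonneg (ones_nonneg E _ v y) (by unfold edgeMatrix; split <;> norm_num))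
          (Finset.mem_univ c)
end pos
noncomputable def genM {V : Type*} [DecidableEq V] (E : Finset (V × V)) :
    Matrix V V (MvPolynomial ↥E ℝ) :=
  fun w z => if h : (z, w) ∈ E then MvPolynomial.X ⟨(z, w), h⟩ else 0

lemma map_genM {V : Type*} [Fintype V] [DecidableEq V] (E : Finset (V × V)) (β : ↥E → ℝ) :
    ((1 : Matrix V V (MvPolynomial ↥E ℝ)) - genM E).map (MvPolynomial.eval β) =
      1 - edgeMatrix E β := by
  ext w z
  simp only [Matrix.map_apply, Matrix.sub_apply, map_sub]
  congr 1
  · by_cases h : w = z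
    · subst h; simp [Matrix.one_apply_eq]
    · rw [Matrix.one_apply_ne h, Matrix.one_apply_ne h, map_zero]
  · unfold genM edgeMatrix
    split <;> simp
section adj
variable {V : Type*} [Fintype V] [DecidableEq V] (E : Finset (V × V))


lemma adj_ne (hacyc : ∀ v : V, ¬ Relation.TransGen (fun a b => (a, b) ∈ E) v v)
    (u v : V) (hu : Relation.TransGen (fun a b => (a, b) ∈ E) u v) :
    ((1 - edgeMatrix E fun _ => 1).adjugate) v u ≠ 0 := by
  set B := edgeMatrix E fun _ => 1 with hB
  set N := Fintype.card V with hN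
  have hsupp : ∀ w z, (z, w) ∉ E → B w z = 0 := by
    intro w z h
    rw [hB]
    unfold edgeMatrix
    rw [dif_neg h]
  have hnil : B ^ N = 0 := pow_eq_zero_of_acyclic E hacyc B hsupp
  set C : Matrix V V ℝ := ∑ k ∈ Finset.range N, B ^ k with hC
  have hCB : C * (1 - B) = 1 := by
    have h1 : C * (B - 1) = B ^ N - 1 := geom_sum_mul B N
    have h2 : C * (1 - B) = -(C * (B - 1)) := by noncomm_ring
    rw [h2, h1, hnil]
    simp
  have hdet : IsUnit (1 - B).det := Matrix.isUnit_det_of_left_inverse hCB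
  have hinv : (1 - B)⁻¹ = C := Matrix.inv_eq_left_inv hCB
  have hpos : 0 < C v u := by
    obtain ⟨k, hk⟩ := ones_pos E u v hu
    have hklt : k + 1 < N := by
      by_contra hge
      push_neg at hge
      have : B ^ (k + 1) = 0 := by
        have : B ^ (k + 1) = B ^ N * B ^ (k + 1 - N) := by
          rw [← pow_add]
          congr 1
          omega
        rw [this, hnil, Matrix.zero_mul]
      rw [this] at hk
      simp at hk
    have hCvu : C v u = ∑ k ∈ Finset.range N, (B ^ k) v u := by
      rw [hC, Matrix.sum_apply]
    rw [hCvu]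
    refine Finset.sum_pos' (fun i _ => ones_nonneg E i v u) ⟨k + 1, Finset.mem_range.mpr hklt, hk⟩
  intro hadj
  have := Matrix.inv_def (1 - B)
  rw [hinv] at this
  have hentry := congrArg (fun M : Matrix V V ℝ => M v u) this
  simp only [Matrix.smul_apply, smul_eq_mul, hadj, mul_zero] at hentry
  rw [hentry] at hpos
  exact lt_irrefl 0 hpos
end adj

/-- For a finite DAG `(V, E)` and `u ∈ an(v)`, the set of edge-weight
vectors `β ∈ ℝ^E` for which `[(I − B(β))⁻¹]_{vu} = 0` has Lebesgue measure zero. -/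
theorem stmt_3 {V : Type*} [Fintype V] [DecidableEq V]
    (E : Finset (V × V))
    (hacyc : ∀ v : V, ¬ Relation.TransGen (fun a b => (a, b) ∈ E) v v)
    (u v : V) (hu : Relation.TransGen (fun a b => (a, b) ∈ E) u v) :
    volume {β : ↥E → ℝ | ((1 - edgeMatrix E β)⁻¹) v u = 0} = 0 := by
  classical
  set D := ((1 : Matrix V V (MvPolynomial ↥E ℝ)) - genM E).det with hD
  set P := (((1 : Matrix V V (MvPolynomial ↥E ℝ)) - genM E).adjugate) v u with hP
  have hDβ : ∀ β : ↥E → ℝ, MvPolynomial.eval β D = (1 - edgeMatrix E β).det := by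
    intro β
    rw [hD, RingHom.map_det, RingHom.mapMatrix_apply, map_genM]
  have hPβ : ∀ β : ↥E → ℝ, MvPolynomial.eval β P =
      ((1 - edgeMatrix E β).adjugate) v u := by
    intro β
    have h1 := (MvPolynomial.eval β).map_adjugate
      ((1 : Matrix V V (MvPolynomial ↥E ℝ)) - genM E)
    rw [RingHom.mapMatrix_apply, RingHom.mapMatrix_apply, map_genM] at h1
    have h2 := congrArg (fun M : Matrix V V ℝ => M v u) h1
    simpa [Matrix.map_apply, ← hP] using h2
  have hD0 : D ≠ 0 := by
    intro h
    have h1 := hDβ 0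
    rw [h, map_zero] at h1
    have hz : edgeMatrix E (0 : ↥E → ℝ) = 0 := by
      ext w z
      unfold edgeMatrix
      split <;> simp
    rw [hz, sub_zero, Matrix.det_one] at h1
    norm_num at h1
  have hP0 : P ≠ 0 := by
    intro h
    have h1 := hPβ (fun _ => 1)
    rw [h, map_zero] at h1
    exact adj_ne E hacyc u v hu h1.symm
  have hsub : {β : ↥E → ℝ | ((1 - edgeMatrix E β)⁻¹) v u = 0} ⊆
      {β : ↥E → ℝ | MvPolynomial.eval β D = 0} ∪
        {β : ↥E → ℝ | MvPolynomial.eval β P = 0} := by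
    intro β hβ
    by_cases hd : MvPolynomial.eval β D = 0
    · exact Or.inl hd
    · right
      rw [Set.mem_setOf_eq, hPβ]
      rw [Set.mem_setOf_eq] at hβ
      have hdet : (1 - edgeMatrix E β).det ≠ 0 := by rw [← hDβ]; exact hd
      have h3 := Matrix.inv_def (1 - edgeMatrix E β)
      have hentry := congrArg (fun M : Matrix V V ℝ => M v u) h3
      simp only [Matrix.smul_apply, smul_eq_mul] at hentry
      rw [hβ, Ring.inverse_eq_inv'] at hentry
      rcases mul_eq_zero.mp hentry.symm with h | h
      · exact absurd h (inv_ne_zero hdet)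
      · exact h
  exact measure_mono_null hsub
    (measure_union_null (mv_zero_set D hD0) (mv_zero_set P hP0))
end

section
/- Let V be a finite set, E ⊆ V × V an acyclic relation, and B ∈ ℝ^{V×V} supported on E; write Λ = I − B. Then for any A ⊆ V with complement Ā, the block Λ_{Ā,Ā} and the submatrix (Λ^{-1})_{A,A} are invertible, and [(Λ^{-1})_{A,A}]^{-1} = Λ_{A,A} − Λ_{A,Ā}(Λ_{Ā,Ā})^{-1}Λ_{Ā,A}. Consequently, the marginal direct effects matrix B̃(A) = I − [(Λ^{-1})_{A,A}]^{-1} satisfies, for all distinct u, v ∈ A, B̃(A)_{vu} = B_{vu} + Σ_{s∈Ā} Σ_{t∈Ā} B_{vs} [(Λ_{Ā,Ā})^{-1}]_{st} B_{tu}. -/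
open Matrix

/-- The submatrix of `M` with rows indexed by `R` and columns indexed by `C`. -/
def msub {V : Type*} (M : Matrix V V ℝ) (R C : Finset V) : Matrix ↥R ↥C ℝ :=
  M.submatrix (fun i => (i : V)) (fun j => (j : V))

/-- The marginal direct effects matrix `B̃(A) = I − [((I−B)⁻¹)_{A,A}]⁻¹`. -/
noncomputable def Btilde {V : Type*} [Fintype V] [DecidableEq V]
    (B : Matrix V V ℝ) (A : Finset V) : Matrix ↥A ↥A ℝ :=
  1 - (msub (1 - B)⁻¹ A A)⁻¹

lemma nilp_of_height {W : Type*} [Fintype W] [DecidableEq W] (M : Matrix W W ℝ) (g : W → ℕ)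
    (hg : ∀ u v : W, M v u ≠ 0 → g u < g v) : IsNilpotent M := by
  have key : ∀ k : ℕ, ∀ u v : W, (M ^ k) v u ≠ 0 → g u + k ≤ g v := by
    intro k
    induction k with
    | zero =>
      intro u v h
      rw [pow_zero] at h
      rcases eq_or_ne v u with rfl | hne
      · omega
      · exact absurd (one_apply_ne hne) h
    | succ n ih =>
      intro u v h
      rw [pow_succ, Matrix.mul_apply] at h
      obtain ⟨w, _, hw⟩ := Finset.exists_ne_zero_of_sum_ne_zero h
      have h1 := ih w v (left_ne_zero_of_mul hw)
      have h2 := hg u w (right_ne_zero_of_mul hw)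
      omega
  refine ⟨Finset.univ.sup g + 1, ?_⟩
  ext v u
  by_contra h
  have := key _ u v h
  have : g v ≤ Finset.univ.sup g := Finset.le_sup (Finset.mem_univ v)
  omega

lemma supported_nilpotent {V : Type*} [Fintype V]
    (r : V → V → Prop) (hacyc : ∀ v : V, ¬ Relation.TransGen r v v)
    {W : Type*} [Fintype W] [DecidableEq W] (c : W → V) (M : Matrix W W ℝ)
    (hM : ∀ u v : W, M v u ≠ 0 → r (c u) (c v)) : IsNilpotent M := by
  classical
  set f : V → ℕ := fun v => (Finset.univ.filter (fun x => Relation.TransGen r x v)).card with hf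
  have hmono : ∀ a b : V, r a b → f a < f b := by
    intro a b hab
    apply Finset.card_lt_card
    constructor
    · intro x hx
      simp only [Finset.mem_filter, Finset.mem_univ, true_and] at hx ⊢
      exact hx.trans (Relation.TransGen.single hab)
    · intro hsub
      have ha : a ∈ Finset.univ.filter (fun x => Relation.TransGen r x b) := by
        simp [Relation.TransGen.single hab]
      have := hsub ha
      simp only [Finset.mem_filter, Finset.mem_univ, true_and] at this
      exact hacyc a this
  exact nilp_of_height M (f ∘ c) (fun u v h => hmono _ _ (hM u v h))

lemma msub_one_sub {V : Type*} [Fintype V] [DecidableEq V] (B : Matrix V V ℝ) (R : Finset V) :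
    msub (1 - B) R R = 1 - msub B R R := by
  ext i j
  simp only [msub, Matrix.submatrix_apply, Matrix.sub_apply, Matrix.one_apply, Subtype.coe_inj]

/-- With `Λ = I − B` for `B` supported on an acyclic relation and any
`A ⊆ V`: the block `Λ_{Ā,Ā}` and the submatrix `(Λ⁻¹)_{A,A}` are invertible,
`[(Λ⁻¹)_{A,A}]⁻¹ = Λ_{A,A} − Λ_{A,Ā} (Λ_{Ā,Ā})⁻¹ Λ_{Ā,A}`, and for distinct `u, v ∈ A`,
`B̃(A)_{vu} = B_{vu} + Σ_{s∈Ā} Σ_{t∈Ā} B_{vs} [(Λ_{Ā,Ā})⁻¹]_{st} B_{tu}`. -/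
theorem stmt_4 {V : Type*} [Fintype V] [DecidableEq V]
    (r : V → V → Prop) (hacyc : ∀ v : V, ¬ Relation.TransGen r v v)
    (B : Matrix V V ℝ) (hsupp : ∀ u v : V, B v u ≠ 0 → r u v)
    (A : Finset V) :
    IsUnit (msub (1 - B) Aᶜ Aᶜ) ∧
    IsUnit (msub (1 - B)⁻¹ A A) ∧
    (msub (1 - B)⁻¹ A A)⁻¹ =
      msub (1 - B) A A - msub (1 - B) A Aᶜ * (msub (1 - B) Aᶜ Aᶜ)⁻¹ * msub (1 - B) Aᶜ A ∧
    ∀ u v : ↥A, u ≠ v →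
      Btilde B A v u =
        B (v : V) (u : V) +
          ∑ s : ↥(Aᶜ), ∑ t : ↥(Aᶜ),
            B (v : V) (s : V) * (msub (1 - B) Aᶜ Aᶜ)⁻¹ s t * B (t : V) (u : V) := by
  classical
  -- Λ is invertible
  have hΛ : IsUnit (1 - B) :=
    (supported_nilpotent r hacyc id B (fun u v h => hsupp u v h)).isUnit_one_sub
  -- the Aᶜ block is invertible
  have hDnil : IsNilpotent (msub B Aᶜ Aᶜ) :=
    supported_nilpotent r hacyc (fun i : ↥(Aᶜ) => (i : V)) (msub B Aᶜ Aᶜ)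
      (fun u v h => hsupp _ _ h)
  have hD : IsUnit (msub (1 - B) Aᶜ Aᶜ) := by
    rw [msub_one_sub]; exact hDnil.isUnit_one_sub
  -- block decomposition
  set P := msub (1 - B) A A with hP
  set Q := msub (1 - B) A Aᶜ with hQ
  set Rm := msub (1 - B) Aᶜ A with hR
  set D := msub (1 - B) Aᶜ Aᶜ with hDdef
  have hcompl : ∀ a : V, a ∈ Aᶜ ↔ ¬ a ∈ A := fun a => Finset.mem_compl
  set e : ↥A ⊕ ↥(Aᶜ) ≃ V :=
    (Equiv.sumCongr (Equiv.refl ↥A) (Equiv.subtypeEquivRight hcompl)).trans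
      (Equiv.sumCompl (· ∈ A)) with he
  have hei : ∀ i : ↥A, e (Sum.inl i) = (i : V) := fun i => rfl
  have hej : ∀ j : ↥(Aᶜ), e (Sum.inr j) = (j : V) := fun j => rfl
  have hblocks : ∀ M : Matrix V V ℝ,
      M.submatrix e e = fromBlocks (msub M A A) (msub M A Aᶜ) (msub M Aᶜ A) (msub M Aᶜ Aᶜ) := by
    intro M
    ext i j
    rcases i with i | i <;> rcases j with j | j <;>
      simp [msub, fromBlocks, hei, hej]
  letI : Invertible (1 - B) := hΛ.invertible
  letI : Invertible D := hD.invertible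
  letI iΛ' : Invertible ((1 - B).submatrix e e) := submatrixEquivInvertible (1 - B) e e
  letI iFB : Invertible (fromBlocks P Q Rm D) := by rw [← hblocks]; exact iΛ'
  letI iS : Invertible (P - Q * ⅟D * Rm) := invertibleOfFromBlocks₂₂Invertible P Q Rm D
  -- the key identity: msub Λ⁻¹ A A = ⅟(Schur complement)
  have hinv : msub (1 - B)⁻¹ A A = ⅟(P - Q * ⅟D * Rm) := by
    have h1 : (1 - B)⁻¹.submatrix e e = ((1 - B).submatrix e e)⁻¹ :=
      (inv_submatrix_equiv (1 - B) e e).symm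
    have h2 : ((1 - B).submatrix e e)⁻¹ = (fromBlocks P Q Rm D)⁻¹ := by rw [hblocks]
    have h3 : (fromBlocks P Q Rm D)⁻¹ = ⅟(fromBlocks P Q Rm D) :=
      (invOf_eq_nonsing_inv (fromBlocks P Q Rm D)).symm
    have h4 := invOf_fromBlocks₂₂_eq P Q Rm D
    have : (1 - B)⁻¹.submatrix e e =
        fromBlocks (⅟(P - Q * ⅟D * Rm)) (-(⅟(P - Q * ⅟D * Rm) * Q * ⅟D))
          (-(⅟D * Rm * ⅟(P - Q * ⅟D * Rm))) (⅟D + ⅟D * Rm * ⅟(P - Q * ⅟D * Rm) * Q * ⅟D) := by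
      rw [h1, h2, ← invOf_eq_nonsing_inv, h4]
    ext i j
    have := congrFun (congrFun this (Sum.inl i)) (Sum.inl j)
    simpa [msub, hei] using this
  letI : Invertible (msub (1 - B)⁻¹ A A) := by rw [hinv]; exact invertibleInvOf
  have hAA : IsUnit (msub (1 - B)⁻¹ A A) := isUnit_of_invertible _
  have hSchur : (msub (1 - B)⁻¹ A A)⁻¹ = P - Q * D⁻¹ * Rm := by
    rw [hinv, ← invOf_eq_nonsing_inv, invOf_invOf, invOf_eq_nonsing_inv]
  refine ⟨hD, hAA, hSchur, ?_⟩
  intro u v huv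
  have hvu : v ≠ u := huv.symm
  rw [Btilde, Matrix.sub_apply, Matrix.one_apply_ne hvu, hSchur, Matrix.sub_apply]
  have hPvu : P v u = - B (v : V) (u : V) := by
    simp [hP, msub, Matrix.one_apply_ne (fun h => hvu (Subtype.ext h))]
  have hQ' : ∀ (i : ↥A) (s : ↥(Aᶜ)), Q i s = - B (i : V) (s : V) := by
    intro i s
    have : (i : V) ≠ (s : V) := by
      intro h
      have := s.2
      rw [← h] at this
      exact (Finset.mem_compl.mp this) i.2
    simp [hQ, msub, Matrix.one_apply_ne this]
  have hR' : ∀ (t : ↥(Aᶜ)) (i : ↥A), Rm t i = - B (t : V) (i : V) := by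
    intro t i
    have : (t : V) ≠ (i : V) := by
      intro h
      have := t.2
      rw [h] at this
      exact (Finset.mem_compl.mp this) i.2
    simp [hR, msub, Matrix.one_apply_ne this]
  rw [hPvu]
  have hmul : (Q * D⁻¹ * Rm) v u =
      ∑ s : ↥(Aᶜ), ∑ t : ↥(Aᶜ), B (v : V) (s : V) * D⁻¹ s t * B (t : V) (u : V) := by
    simp only [Matrix.mul_apply, Finset.sum_mul]
    rw [Finset.sum_comm]
    refine Finset.sum_congr rfl fun s _ => Finset.sum_congr rfl fun t _ => ?_
    rw [hQ', hR']
    ring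
  rw [hmul]
  ring
end

section
/- Let V be a finite set, E ⊆ V × V an acyclic relation, and B ∈ ℝ^{V×V} supported on E. Let A ⊆ V and let u, v ∈ A be distinct. If u ∉ an(v) (there is no directed path in E from u to v), then the marginal direct effects matrix satisfies B̃(A)_{vu} = 0. -/
open Matrix

/-- For `B` supported on an acyclic relation, `A ⊆ V`, and distinct
`u, v ∈ A` with `u ∉ an(v)` (no directed path from `u` to `v`, i.e.
`¬ Relation.TransGen r u v`), the marginal direct effects satisfy `B̃(A)_{vu} = 0`. -/
theorem stmt_5 {V : Type*} [Fintype V] [DecidableEq V]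
    (r : V → V → Prop) (hacyc : ∀ v : V, ¬ Relation.TransGen r v v)
    (B : Matrix V V ℝ) (hsupp : ∀ u v : V, B v u ≠ 0 → r u v)
    (A : Finset V) (u v : ↥A) (hne : u ≠ v)
    (hnan : ¬ Relation.TransGen r (u : V) (v : V)) :
    Btilde B A v u = 0 := by
  classical
  have hne' : (u : V) ≠ (v : V) := fun h => hne (Subtype.ext h)
  -- extend r by the edge (v, u); this stays acyclic since there is no path u → v
  set r' : V → V → Prop := fun a b => r a b ∨ (a = (v : V) ∧ b = (u : V)) with hr'def
  have claim : ∀ a b : V, Relation.TransGen r' a b →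
      Relation.TransGen r a b ∨
        (Relation.ReflTransGen r a (v : V) ∧ Relation.ReflTransGen r (u : V) b) := by
    intro a b hab
    induction hab with
    | single h =>
      rcases h with h | ⟨h1, h2⟩
      · exact Or.inl (Relation.TransGen.single h)
      · exact Or.inr ⟨by rw [h1], by rw [h2]⟩
    | tail hab hbc ih =>
      rcases ih with ih | ⟨ih1, ih2⟩
      · rcases hbc with h | ⟨h1, h2⟩
        · exact Or.inl (ih.tail h)
        · exact Or.inr ⟨h1 ▸ ih.to_reflTransGen, h2 ▸ Relation.ReflTransGen.refl⟩
      · rcases hbc with h | ⟨h1, h2⟩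
        · exact Or.inr ⟨ih1, ih2.tail h⟩
        · exfalso
          have huv : Relation.ReflTransGen r (u : V) (v : V) := h1 ▸ ih2
          rcases Relation.reflTransGen_iff_eq_or_transGen.mp huv with h | h
          · exact hne' h.symm
          · exact hnan h
  have hacyc' : ∀ w : V, ¬ Relation.TransGen r' w w := by
    intro w hw
    rcases claim w w hw with h | ⟨h1, h2⟩
    · exact hacyc w h
    · have huv : Relation.ReflTransGen r (u : V) (v : V) := h2.trans h1
      rcases Relation.reflTransGen_iff_eq_or_transGen.mp huv with h | h
      · exact hne' h.symm
      · exact hnan h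
  -- a partial order containing r'
  set s : V → V → Prop := fun a b => a = b ∨ Relation.TransGen r' a b with hsdef
  haveI hpo : IsPartialOrder V s :=
  { refl := fun a => Or.inl rfl
    trans := by
      rintro a b c (rfl | hab) (rfl | hbc)
      · exact Or.inl rfl
      · exact Or.inr hbc
      · exact Or.inr hab
      · exact Or.inr (hab.trans hbc)
    antisymm := by
      rintro a b (rfl | hab) (h | hba)
      · rfl
      · rfl
      · exact h.symm
      · exact absurd (hab.trans hba) (hacyc' a) }
  obtain ⟨t, htl, hst⟩ := extend_partialOrder s
  letI : LinearOrder V :=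
  { le := t
    le_refl := htl.toIsPartialOrder.toIsPreorder.toRefl.refl
    le_trans := htl.toIsPartialOrder.toIsPreorder.toIsTrans.trans
    le_antisymm := htl.toIsPartialOrder.toAntisymm.antisymm
    le_total := htl.toTotal.total
    toDecidableLE := fun _ _ => Classical.dec _ }
  have hle : ∀ a b : V, Relation.TransGen r' a b → a ≤ b :=
    fun a b h => hst a b (Or.inr h)
  have hlt : ∀ a b : V, Relation.TransGen r' a b → a < b := by
    intro a b h
    refine lt_of_le_of_ne (hle a b h) ?_
    rintro rfl; exact hacyc' a h
  -- B is lower triangular w.r.t. this order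
  have hBtri : B.BlockTriangular (OrderDual.toDual : V → Vᵒᵈ) := by
    intro i j hij
    by_contra hBij
    have h1 : (i : V) < j := hij
    have h2 : (j : V) < i := hlt j i (Relation.TransGen.single (Or.inl (hsupp j i hBij)))
    exact absurd h1 (not_lt.mpr h2.le)
  set M : Matrix V V ℝ := 1 - B with hMdef
  have hMtri : M.BlockTriangular (OrderDual.toDual : V → Vᵒᵈ) :=
    (blockTriangular_one).sub hBtri
  have hBdiag : ∀ i : V, B i i = 0 := by
    intro i
    by_contra h
    exact hacyc' i (Relation.TransGen.single (Or.inl (hsupp i i h)))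
  have hMdiag : ∀ i : V, M i i = 1 := by
    intro i; simp [hMdef, hBdiag i]
  have hMdet : M.det = 1 := by
    rw [Matrix.det_of_lowerTriangular M hMtri]
    simp [hMdiag]
  have hMunit : IsUnit M.det := by rw [hMdet]; exact isUnit_one
  haveI : Invertible M := M.invertibleOfIsUnitDet hMunit
  have hMinvTri : M⁻¹.BlockTriangular (OrderDual.toDual : V → Vᵒᵈ) :=
    Matrix.blockTriangular_inv_of_blockTriangular hMtri
  have hMinvdiag : ∀ i : V, M⁻¹ i i = 1 := by
    intro i
    have h1 : (M⁻¹ * M) i i = 1 := by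
      rw [Matrix.nonsing_inv_mul M hMunit, Matrix.one_apply_eq]
    rw [Matrix.mul_apply, Finset.sum_eq_single i] at h1
    · rwa [hMdiag i, mul_one] at h1
    · intro k _ hk
      rcases lt_or_gt_of_ne hk with h | h
      · have : M k i = 0 := hMtri (show OrderDual.toDual (i : V) < OrderDual.toDual k from h)
        rw [this, mul_zero]
      · have : M⁻¹ i k = 0 := hMinvTri (show OrderDual.toDual (k : V) < OrderDual.toDual i from h)
        rw [this, zero_mul]
    · intro h; exact absurd (Finset.mem_univ i) h
  set N : Matrix ↥A ↥A ℝ := msub M⁻¹ A A with hNdef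
  have hNtri : N.BlockTriangular (OrderDual.toDual : ↥A → (↥A)ᵒᵈ) := by
    intro i j hij
    have h1 : (i : V) < (j : V) := Subtype.coe_lt_coe.mpr hij
    exact hMinvTri (show OrderDual.toDual ((j : V)) < OrderDual.toDual ((i : V)) from h1)
  have hNdiag : ∀ i : ↥A, N i i = 1 := fun i => hMinvdiag (i : V)
  have hNdet : N.det = 1 := by
    rw [Matrix.det_of_lowerTriangular N hNtri]
    simp [hNdiag]
  have hNunit : IsUnit N.det := by rw [hNdet]; exact isUnit_one
  haveI : Invertible N := N.invertibleOfIsUnitDet hNunit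
  have hNinvTri : N⁻¹.BlockTriangular (OrderDual.toDual : ↥A → (↥A)ᵒᵈ) :=
    Matrix.blockTriangular_inv_of_blockTriangular hNtri
  have hvu : (v : V) < (u : V) :=
    hlt _ _ (Relation.TransGen.single (Or.inr ⟨rfl, rfl⟩))
  have hvu' : v < u := Subtype.coe_lt_coe.mp hvu
  have hNinv0 : N⁻¹ v u = 0 :=
    hNinvTri (show OrderDual.toDual u < OrderDual.toDual v from hvu')
  show (1 : Matrix ↥A ↥A ℝ) v u - N⁻¹ v u = 0
  rw [hNinv0, Matrix.one_apply_ne (Ne.symm hne), sub_zero]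
end

section
/- Let V be a finite set, E ⊆ V × V an acyclic relation, and B ∈ ℝ^{V×V} supported on E; write Π = (I − B)^{-1}. Let v ∈ V and C ⊆ V ∖ {v}. Then the row vector identity Π_{v,C} = B̃(C ∪ {v})_{v,C} · Π_{C,C} holds; that is, for every u ∈ C, Π_{vu} = Σ_{c∈C} B̃(C ∪ {v})_{vc} Π_{cu}. -/
open Matrix

namespace Stmt7Aux

set_option linter.unusedSectionVars false

variable {V : Type*} [Fintype V] [DecidableEq V]

/-- A height function for an acyclic relation. -/
noncomputable def ht (s : V → V → Prop) (v : V) : ℕ :=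
  Set.ncard {u | Relation.TransGen s u v}

lemma ht_lt {s : V → V → Prop} (hacyc : ∀ v, ¬ Relation.TransGen s v v)
    {u v : V} (h : Relation.TransGen s u v) : ht s u < ht s v := by
  refine Set.ncard_lt_ncard ?_ (Set.toFinite _)
  exact (Set.ssubset_iff_of_subset (fun x hx => Relation.TransGen.trans hx h)).mpr
    ⟨u, h, fun hu => hacyc u hu⟩

lemma ht_lt_card {s : V → V → Prop} (hacyc : ∀ v, ¬ Relation.TransGen s v v)
    (v : V) : ht s v < Fintype.card V := by
  have hss : {u | Relation.TransGen s u v} ⊂ Set.univ := by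
    rw [Set.ssubset_univ_iff]
    intro h
    exact hacyc v (by have : v ∈ {u | Relation.TransGen s u v} := h ▸ Set.mem_univ v; exact this)
  have := Set.ncard_lt_ncard hss Set.finite_univ
  rwa [Set.ncard_univ, Nat.card_eq_fintype_card] at this

lemma pow_support {s : V → V → Prop} (hacyc : ∀ v, ¬ Relation.TransGen s v v)
    {M : Matrix V V ℝ} (hs : ∀ u v : V, M v u ≠ 0 → s u v) :
    ∀ k, ∀ u w : V, (M ^ (k + 1)) w u ≠ 0 →
      Relation.TransGen s u w ∧ ht s u + (k + 1) ≤ ht s w := by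
  intro k
  induction k with
  | zero =>
      intro u w h
      rw [pow_one] at h
      have h1 := Relation.TransGen.single (hs u w h)
      exact ⟨h1, ht_lt hacyc h1⟩
  | succ k ih =>
      intro u w h
      rw [pow_succ, Matrix.mul_apply] at h
      obtain ⟨x, -, hx⟩ := Finset.exists_ne_zero_of_sum_ne_zero h
      obtain ⟨h1, h2⟩ := mul_ne_zero_iff.mp hx
      obtain ⟨ht1, hb1⟩ := ih x w h1
      have hsux := Relation.TransGen.single (hs u x h2)
      have hb2 := ht_lt hacyc hsux
      exact ⟨hsux.trans ht1, by omega⟩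

/-- Main auxiliary lemma: for `M` supported on an acyclic relation `s`,
`(1 - M)⁻¹` is a genuine (left) inverse, has unit diagonal, and its
off-diagonal support is contained in the transitive closure of `s`. -/
lemma main (s : V → V → Prop) (hacyc : ∀ v, ¬ Relation.TransGen s v v)
    (M : Matrix V V ℝ) (hs : ∀ u v : V, M v u ≠ 0 → s u v) :
    (1 - M)⁻¹ * (1 - M) = 1 ∧
    (∀ u : V, (1 - M)⁻¹ u u = 1) ∧
    (∀ u w : V, w ≠ u → (1 - M)⁻¹ w u ≠ 0 → Relation.TransGen s u w) := by
  set n := Fintype.card V with hn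
  set S : Matrix V V ℝ := ∑ k ∈ Finset.range n, M ^ k with hS
  have hpow := pow_support hacyc hs
  have hMn : M ^ n = 0 := by
    ext w u
    rw [Matrix.zero_apply]
    by_contra h0
    have hpos : 0 < n := Fintype.card_pos_iff.mpr ⟨u⟩
    obtain ⟨k, hk⟩ : ∃ k, n = k + 1 := ⟨n - 1, by omega⟩
    rw [hk] at h0
    have hb := (hpow k u w h0).2
    have hc := ht_lt_card hacyc w
    omega
  have hgeo : S * (1 - M) = 1 := by
    have h1 : S * (1 - M) = ∑ k ∈ Finset.range n, (M ^ k - M ^ (k + 1)) := by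
      rw [hS, Finset.sum_mul]
      exact Finset.sum_congr rfl fun k _ => by rw [mul_sub, mul_one, pow_succ]
    rw [h1, Finset.sum_range_sub' (fun k => M ^ k), pow_zero, hMn, sub_zero]
  have hinv : (1 - M)⁻¹ = S := Matrix.inv_eq_left_inv hgeo
  have hdiag : ∀ u : V, S u u = 1 := by
    intro u
    have h0 : (0 : ℕ) ∈ Finset.range n := Finset.mem_range.mpr (Fintype.card_pos_iff.mpr ⟨u⟩)
    rw [hS, Matrix.sum_apply, Finset.sum_eq_single_of_mem 0 h0]
    · simp
    · intro k _ hk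
      obtain ⟨j, rfl⟩ : ∃ j, k = j + 1 := ⟨k - 1, by omega⟩
      by_contra h
      exact hacyc u (hpow j u u h).1
  have hoff : ∀ u w : V, w ≠ u → S w u ≠ 0 → Relation.TransGen s u w := by
    intro u w hne h
    rw [hS, Matrix.sum_apply] at h
    obtain ⟨k, -, hk⟩ := Finset.exists_ne_zero_of_sum_ne_zero h
    match k, hk with
    | 0, hk => exact absurd (by simp [Matrix.one_apply_ne hne]) hk
    | (j+1), hk => exact (hpow j u w hk).1
  refine ⟨by rw [hinv]; exact hgeo, fun u => by rw [hinv]; exact hdiag u,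
    fun u w h1 h2 => hoff u w h1 (by rwa [hinv] at h2)⟩

end Stmt7Aux

/-- For `B` supported on an acyclic relation, `Π = (I − B)⁻¹`, `v ∉ C`:
the row-vector identity `Π_{v,C} = B̃(C ∪ {v})_{v,C} Π_{C,C}`, i.e. for each `u ∈ C`,
`Π_{vu} = Σ_{c∈C} B̃(C ∪ {v})_{vc} Π_{cu}`. -/
theorem stmt_7 {V : Type*} [Fintype V] [DecidableEq V]
    (r : V → V → Prop) (hacyc : ∀ v : V, ¬ Relation.TransGen r v v)
    (B : Matrix V V ℝ) (hsupp : ∀ u v : V, B v u ≠ 0 → r u v)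
    (v : V) (C : Finset V) (hvC : v ∉ C) :
    ∀ u ∈ C,
      (1 - B)⁻¹ v u =
        ∑ c : ↥C,
          Btilde B (insert v C) ⟨v, Finset.mem_insert_self v C⟩
              ⟨(c : V), Finset.mem_insert_of_mem c.2⟩ *
            (1 - B)⁻¹ (c : V) u := by
  intro u hu
  obtain ⟨-, hPdiag, hPoff⟩ := Stmt7Aux.main r hacyc B hsupp
  set A : Finset V := insert v C with hA
  -- the restricted relation on A
  set s' : ↥A → ↥A → Prop := fun a b => Relation.TransGen r (a : V) (b : V) with hs'def
  have hs'trans : Transitive s' := fun a b c h1 h2 => h1.trans h2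
  have hacyc' : ∀ a : ↥A, ¬ Relation.TransGen s' a a := by
    intro a h
    rw [@Relation.transGen_eq_self _ s' ⟨fun _ _ _ h1 h2 => hs'trans h1 h2⟩] at h
    exact hacyc a h
  set M' : Matrix ↥A ↥A ℝ := 1 - msub (1 - B)⁻¹ A A with hM'
  have hs' : ∀ a b : ↥A, M' b a ≠ 0 → s' a b := by
    intro a b h
    by_cases hab : b = a
    · subst hab
      exact absurd (by simp [hM', msub, Matrix.sub_apply, hPdiag]) h
    · have hco : (b : V) ≠ (a : V) := fun hc => hab (Subtype.ext hc)
      have : (1 - B)⁻¹ (b : V) (a : V) ≠ 0 := by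
        intro h0
        apply h
        simp [hM', msub, Matrix.sub_apply, Matrix.one_apply_ne hab, h0]
      exact hPoff _ _ hco this
  obtain ⟨hNinv, hNdiag, -⟩ := Stmt7Aux.main s' hacyc' M' hs'
  have h1M : (1 : Matrix ↥A ↥A ℝ) - M' = msub (1 - B)⁻¹ A A := by
    rw [hM']; abel
  rw [h1M] at hNinv hNdiag
  set N : Matrix ↥A ↥A ℝ := (msub (1 - B)⁻¹ A A)⁻¹ with hN
  have hvA : v ∈ A := Finset.mem_insert_self v C
  have huA : u ∈ A := Finset.mem_insert_of_mem hu
  set vA : ↥A := ⟨v, hvA⟩ with hvAdef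
  set uA : ↥A := ⟨u, huA⟩ with huAdef
  have hvu : vA ≠ uA := by
    intro h
    exact hvC (by rw [show v = u from congrArg Subtype.val h]; exact hu)
  have key : ∑ a : ↥A, N vA a * (1 - B)⁻¹ (a : V) u = 0 := by
    have := congrArg (fun M : Matrix ↥A ↥A ℝ => M vA uA) hNinv
    simp only [Matrix.mul_apply] at this
    rw [Matrix.one_apply_ne hvu] at this
    simpa [msub, Matrix.submatrix_apply] using this
  -- split the sum over `A = insert v C`
  have hsplit : ∑ a : ↥A, N vA a * (1 - B)⁻¹ (a : V) u =
      N vA vA * (1 - B)⁻¹ v u +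
        ∑ c : ↥C, N vA ⟨(c : V), Finset.mem_insert_of_mem c.2⟩ * (1 - B)⁻¹ (c : V) u := by
    classical
    set g : V → ℝ := fun x =>
      if hx : x ∈ A then N vA ⟨x, hx⟩ * (1 - B)⁻¹ x u else 0 with hg
    have h1 : ∑ a : ↥A, N vA a * (1 - B)⁻¹ (a : V) u = ∑ x ∈ A, g x := by
      rw [← Finset.sum_coe_sort A g]
      refine Finset.sum_congr rfl fun a _ => ?_
      simp [hg, a.2]
    have h2 : ∑ x ∈ A, g x = g v + ∑ x ∈ C, g x := by
      rw [hA, Finset.sum_insert hvC]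
    have h3 : ∑ x ∈ C, g x =
        ∑ c : ↥C, N vA ⟨(c : V), Finset.mem_insert_of_mem c.2⟩ * (1 - B)⁻¹ (c : V) u := by
      rw [← Finset.sum_coe_sort C]
      refine Finset.sum_congr rfl fun c _ => ?_
      have hc : (c : V) ∈ A := Finset.mem_insert_of_mem c.2
      simp [hg, hc]
    have h4 : g v = N vA vA * (1 - B)⁻¹ v u := by
      simp [hg, hvA]
      exact Or.inl rfl
    rw [h1, h2, h3, h4]
  have hNvv : N vA vA = 1 := hNdiag vA
  have hBt : ∀ c : ↥C,
      Btilde B A vA ⟨(c : V), Finset.mem_insert_of_mem c.2⟩ =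
        - N vA ⟨(c : V), Finset.mem_insert_of_mem c.2⟩ := by
    intro c
    have hne : vA ≠ (⟨(c : V), Finset.mem_insert_of_mem c.2⟩ : ↥A) := by
      intro h
      exact hvC (by rw [show v = (c : V) from congrArg Subtype.val h]; exact c.2)
    simp [Btilde, Matrix.sub_apply, Matrix.one_apply_ne hne, ← hN]
  calc (1 - B)⁻¹ v u
      = - ∑ c : ↥C, N vA ⟨(c : V), Finset.mem_insert_of_mem c.2⟩ * (1 - B)⁻¹ (c : V) u := by
        have := key
        rw [hsplit, hNvv, one_mul] at this
        linarith
    _ = ∑ c : ↥C,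
          Btilde B A vA ⟨(c : V), Finset.mem_insert_of_mem c.2⟩ * (1 - B)⁻¹ (c : V) u := by
        rw [← Finset.sum_neg_distrib]
        exact Finset.sum_congr rfl fun c _ => by rw [hBt c, neg_mul]
end

section
/- Let V be a finite set, E ⊆ V × V an acyclic relation, B ∈ ℝ^{V×V} supported on E, and let ε = (ε_w)_{w∈V} be a square-integrable random vector on a probability space with E[ε] = 0; set Y = (I − B)^{-1}ε. Let v ∈ V and C ⊆ V ∖ {v} satisfy: B_{vu} = 0 for all u ∉ C (i.e., pa(v) ⊆ C), E[Y_C ε_v] = 0 (the zero vector), and E[Y_C Y_Cᵀ] is invertible. Then the population least-squares coefficients satisfy (E[Y_C Y_Cᵀ])^{-1} E[Y_C Y_v] = (B_{v,C})ᵀ, and the corresponding residual satisfies Y_v − B_{v,C} Y_C = ε_v almost surely. -/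
open Matrix MeasureTheory

private lemma l2_mul_integrable {Ω : Type*} [MeasureSpace Ω] {f g : Ω → ℝ}
    (hf : MemLp f 2) (hg : MemLp g 2) : Integrable (fun ω => f ω * g ω) := by
  rw [← memLp_one_iff_integrable]
  have h121 : (1 : ENNReal)/1 = 1/2 + 1/2 := by
    rw [ENNReal.div_add_div_same, div_one]
    norm_num
    exact (ENNReal.div_self (by norm_num) (by norm_num)).symm
  have : ENNReal.HolderTriple 2 2 1 := ⟨by simpa only [one_div] using h121.symm⟩
  have h := hg.smul (φ := f) hf (r := 1)
  exact h

/-- Let `B` be supported on an acyclic relation on a finite `V`, let `ε` be a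
square-integrable mean-zero random vector on a probability space, and `Y = (I − B)⁻¹ ε`.
If `C ⊆ V ∖ {v}` contains all parents of `v` (in the sense `B_{vu} = 0` for `u ∉ C`),
`E[Y_C ε_v] = 0`, and `E[Y_C Y_Cᵀ]` is invertible, then the population least-squares
coefficients `(E[Y_C Y_Cᵀ])⁻¹ E[Y_C Y_v]` equal `(B_{v,C})ᵀ`, and the residual satisfies
`Y_v − B_{v,C} Y_C = ε_v` almost surely. -/
theorem stmt_8 {V : Type*} [Fintype V] [DecidableEq V]
    (r : V → V → Prop) (hacyc : ∀ v : V, ¬ Relation.TransGen r v v)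
    (B : Matrix V V ℝ) (hsupp : ∀ u v : V, B v u ≠ 0 → r u v)
    {Ω : Type*} [MeasureSpace Ω] [IsProbabilityMeasure (volume : Measure Ω)]
    (ε : Ω → V → ℝ)
    (hL2 : ∀ w : V, MemLp (fun ω => ε ω w) 2)
    (hmean : ∀ w : V, ∫ ω, ε ω w = 0)
    (Y : Ω → V → ℝ) (hY : ∀ ω, Y ω = (1 - B)⁻¹ *ᵥ ε ω)
    (v : V) (C : Finset V) (hvC : v ∉ C)
    (hpa : ∀ u : V, u ∉ C → B v u = 0)
    (horth : ∀ c ∈ C, ∫ ω, Y ω c * ε ω v = 0)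
    (hMinv : IsUnit (Matrix.of fun c c' : ↥C => ∫ ω, Y ω (c : V) * Y ω (c' : V))) :
    ((Matrix.of fun c c' : ↥C => ∫ ω, Y ω (c : V) * Y ω (c' : V))⁻¹ *ᵥ
        fun c : ↥C => ∫ ω, Y ω (c : V) * Y ω v) = (fun c : ↥C => B v (c : V)) ∧
    ∀ᵐ ω, Y ω v - ∑ c : ↥C, B v (c : V) * Y ω (c : V) = ε ω v := by
  classical
  -- a topological ordering
  set f : V → ℕ := fun w => (Finset.univ.filter (fun u => Relation.TransGen r u w)).card with hfdef
  have hmono : ∀ u w, r u w → f u < f w := by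
    intro u w h
    apply Finset.card_lt_card
    constructor
    · intro x hx
      simp only [Finset.mem_filter, Finset.mem_univ, true_and] at hx ⊢
      exact hx.tail h
    · intro hsub
      have hu : u ∈ Finset.univ.filter (fun x => Relation.TransGen r x w) := by
        simp [Relation.TransGen.single h]
      have := hsub hu
      simp only [Finset.mem_filter, Finset.mem_univ, true_and] at this
      exact hacyc u this
  have hfle : ∀ w, f w ≤ Fintype.card V := fun w => Finset.card_filter_le _ _
  have hpow : ∀ k u w, (B ^ k) w u ≠ 0 → f u + k ≤ f w := by
    intro k
    induction k with
    | zero =>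
      intro u w h
      simp only [pow_zero] at h
      rcases eq_or_ne w u with rfl | hne
      · simp
      · exact absurd (Matrix.one_apply_ne hne) h
    | succ k ih =>
      intro u w h
      rw [pow_succ'] at h
      have : ∃ x, B w x * (B ^ k) x u ≠ 0 := by
        by_contra hc
        push_neg at hc
        exact h (by simpa [Matrix.mul_apply] using Finset.sum_eq_zero fun x _ => hc x)
      obtain ⟨x, hx⟩ := this
      have h1 : B w x ≠ 0 := fun h0 => hx (by simp [h0])
      have h2 : (B ^ k) x u ≠ 0 := fun h0 => hx (by simp [h0])
      have := hmono x w (hsupp x w h1)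
      have := ih u x h2
      omega
  have hnil : IsNilpotent B := by
    refine ⟨Fintype.card V + 1, ?_⟩
    ext w u
    by_contra h
    simp only [Matrix.zero_apply] at h
    have := hpow (Fintype.card V + 1) u w h
    have := hfle w
    omega
  have hunit : IsUnit (1 - B) := hnil.isUnit_one_sub
  have hdet : IsUnit (1 - B).det := (Matrix.isUnit_iff_isUnit_det _).mp hunit
  have hkey : ∀ ω, ε ω = (1 - B) *ᵥ Y ω := by
    intro ω
    rw [hY ω, Matrix.mulVec_mulVec, Matrix.mul_nonsing_inv _ hdet, Matrix.one_mulVec]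
  have hres : ∀ ω, Y ω v - ∑ c : ↥C, B v (c : V) * Y ω (c : V) = ε ω v := by
    intro ω
    have hv := congrFun (hkey ω) v
    have hsum : ∑ u, B v u * Y ω u = ∑ c : ↥C, B v (c : V) * Y ω (c : V) := by
      rw [Finset.sum_coe_sort C (fun u => B v u * Y ω u)]
      symm
      apply Finset.sum_subset (Finset.subset_univ C)
      intro x _ hx
      rw [hpa x hx, zero_mul]
    have : ((1 - B) *ᵥ Y ω) v = Y ω v - ∑ u, B v u * Y ω u := by
      simp only [Matrix.mulVec, dotProduct, Matrix.sub_apply, Matrix.one_apply, sub_mul,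
        Finset.sum_sub_distrib, ite_mul, one_mul, zero_mul]
      simp
    rw [← hsum]
    rw [hv, this]
  -- L² membership of Y
  have hYL2 : ∀ w : V, MemLp (fun ω => Y ω w) 2 := by
    intro w
    have heq : (fun ω => Y ω w) = fun ω => ∑ u, (1 - B)⁻¹ w u * ε ω u := by
      funext ω
      rw [hY ω]
      rfl
    rw [heq]
    apply memLp_finset_sum
    intro u _
    exact (hL2 u).const_mul _
  have hint : ∀ a b : V, Integrable (fun ω => Y ω a * Y ω b) :=
    fun a b => l2_mul_integrable (hYL2 a) (hYL2 b)
  have hintε : ∀ a : V, Integrable (fun ω => Y ω a * ε ω v) :=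
    fun a => l2_mul_integrable (hYL2 a) (hL2 v)
  have hdetM : IsUnit (Matrix.of fun c c' : ↥C => ∫ ω, Y ω (c : V) * Y ω (c' : V)).det :=
    (Matrix.isUnit_iff_isUnit_det _).mp hMinv
  constructor
  · have hvec : (fun c : ↥C => ∫ ω, Y ω (c : V) * Y ω v) =
        (Matrix.of fun c c' : ↥C => ∫ ω, Y ω (c : V) * Y ω (c' : V)) *ᵥ
          (fun c : ↥C => B v (c : V)) := by
      funext c
      have hpt : ∀ ω, Y ω (c : V) * Y ω v =
          (∑ c' : ↥C, B v (c' : V) * (Y ω (c : V) * Y ω (c' : V))) + Y ω (c : V) * ε ω v := by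
        intro ω
        have h1 : Y ω v = (∑ c' : ↥C, B v (c' : V) * Y ω (c' : V)) + ε ω v := by
          have := hres ω; linarith
        rw [h1, mul_add, Finset.mul_sum]
        congr 1
        apply Finset.sum_congr rfl
        intro c' _
        ring
      calc ∫ ω, Y ω (c : V) * Y ω v
          = ∫ ω, (∑ c' : ↥C, B v (c' : V) * (Y ω (c : V) * Y ω (c' : V))) + Y ω (c : V) * ε ω v :=
            integral_congr_ae (Filter.Eventually.of_forall hpt)
        _ = (∫ ω, ∑ c' : ↥C, B v (c' : V) * (Y ω (c : V) * Y ω (c' : V))) +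
              ∫ ω, Y ω (c : V) * ε ω v := by
            apply integral_add _ (hintε c)
            apply integrable_finset_sum
            intro c' _
            exact ((hint c c').const_mul _)
        _ = ∑ c' : ↥C, B v (c' : V) * ∫ ω, Y ω (c : V) * Y ω (c' : V) := by
            rw [horth c c.2, add_zero]
            have hfs : ∫ ω, ∑ c' : ↥C, B v (c' : V) * (Y ω (c : V) * Y ω (c' : V)) =
                ∑ c' : ↥C, ∫ ω, B v (c' : V) * (Y ω (c : V) * Y ω (c' : V)) :=
              integral_finset_sum _ (fun c' _ => (hint c c').const_mul _)
            rw [hfs]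
            apply Finset.sum_congr rfl
            intro c' _
            exact integral_const_mul _ _
        _ = ((Matrix.of fun c c' : ↥C => ∫ ω, Y ω (c : V) * Y ω (c' : V)) *ᵥ
              (fun c : ↥C => B v (c : V))) c := by
            simp [Matrix.mulVec, dotProduct, mul_comm]
    rw [hvec, Matrix.mulVec_mulVec, Matrix.nonsing_inv_mul _ hdetM, Matrix.one_mulVec]
  · exact Filter.Eventually.of_forall hres
end

section
/- Let V be a finite set, E ⊆ V × V an acyclic relation, B ∈ ℝ^{V×V} supported on E, Ω ∈ ℝ^{V×V} symmetric, and Σ = (I−B)^{-1} Ω (I−B)^{-T}. Let v ∈ V and let C, A ⊆ V ∖ {v} satisfy: (i) pa(v) ⊆ C ⊆ an(v) and Ω_{vu} = 0 for all u ∈ C; (ii) A = An(C); (iii) D ∈ ℝ^{V×V} with D_{A,A} = B_{A,A}; (iv) S ∈ ℝ^{V×V} with S agreeing with Σ on rows and columns indexed by A ∪ {v}; and suppose (I−D)_{C,A} S_{A,C} is invertible. Then the debiased direct effect satisfies δ_v(C, A, S, D) = B_{v,C}. -/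
open Matrix

/-- The debiased direct effect
`δ_v(C, A, S, D) = ([(I−D)_{C,A} S_{A,C}]⁻¹ (I−D)_{C,A} S_{A,v})ᵀ`, as a vector `↥C → ℝ`. -/
noncomputable def delta {V : Type*} [Fintype V] [DecidableEq V]
    (v : V) (C A : Finset V) (S D : Matrix V V ℝ) : ↥C → ℝ :=
  ((msub (1 - D) C A * msub S A C)⁻¹ * msub (1 - D) C A) *ᵥ fun a : ↥A => S (a : V) v

private lemma isUnit_one_sub_of_lt {W : Type*} [Fintype W] [DecidableEq W] [LinearOrder W]
    (B : Matrix W W ℝ) (hlt : ∀ i j : W, B i j ≠ 0 → j < i) : IsUnit (1 - B) := by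
  have htri : (((1 : Matrix W W ℝ) - B)ᵀ).BlockTriangular id := by
    intro i j hij
    have hB : B j i = 0 := by
      by_contra h
      exact absurd (hlt j i h) (not_lt.mpr hij.le)
    have hne : j ≠ i := ne_of_lt hij
    simp [Matrix.transpose_apply, Matrix.sub_apply, Matrix.one_apply_ne hne, hB]
  have hdiag : ∀ i : W, B i i = 0 := by
    intro i
    by_contra h
    exact lt_irrefl i (hlt i i h)
  have hdet : ((1 : Matrix W W ℝ) - B).det = 1 := by
    rw [← Matrix.det_transpose, Matrix.det_of_upperTriangular htri]
    simp [Matrix.transpose_apply, Matrix.sub_apply, Matrix.one_apply, hdiag]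
  exact (Matrix.isUnit_iff_isUnit_det _).2 (by rw [hdet]; exact isUnit_one)

/-- Lemma on the debiased direct effect: with `Σ = (I−B)⁻¹ Ω (I−B)⁻ᵀ`,
`pa(v) ⊆ C ⊆ an(v)`, `Ω_{vu} = 0` for `u ∈ C`, `A = An(C)`, `D_{A,A} = B_{A,A}`,
`S` agreeing with `Σ` on `(A ∪ {v}) × (A ∪ {v})`, and `(I−D)_{C,A} S_{A,C}` invertible,
one has `δ_v(C, A, S, D) = B_{v,C}`. -/
theorem stmt_9 {V : Type*} [Fintype V] [DecidableEq V]
    (r : V → V → Prop) (hacyc : ∀ v : V, ¬ Relation.TransGen r v v)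
    (B : Matrix V V ℝ) (hsupp : ∀ u v : V, B v u ≠ 0 → r u v)
    (Om : Matrix V V ℝ) (hOm : Om.IsSymm)
    (Sig : Matrix V V ℝ) (hSig : Sig = (1 - B)⁻¹ * Om * ((1 - B)⁻¹)ᵀ)
    (v : V) (C A : Finset V) (hvC : v ∉ C) (hvA : v ∉ A)
    (hpa : ∀ u : V, B v u ≠ 0 → u ∈ C)
    (hCan : ∀ c ∈ C, Relation.TransGen r c v)
    (hOmv : ∀ u ∈ C, Om v u = 0)
    (hA : ∀ w : V, w ∈ A ↔ ∃ c ∈ C, Relation.ReflTransGen r w c)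
    (D : Matrix V V ℝ) (hD : ∀ a ∈ A, ∀ a' ∈ A, D a a' = B a a')
    (S : Matrix V V ℝ)
    (hS : ∀ i ∈ insert v A, ∀ j ∈ insert v A, S i j = Sig i j)
    (hinv : IsUnit (msub (1 - D) C A * msub S A C)) :
    delta v C A S D = fun c : ↥C => B v (c : V) := by
  classical
  have hCA : ∀ c ∈ C, c ∈ A := fun c hc => (hA c).2 ⟨c, hc, Relation.ReflTransGen.refl⟩
  -- `1 - B` is invertible (B is nilpotent, supported on an acyclic relation)
  have hu : IsUnit ((1 : Matrix V V ℝ) - B) := by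
    letI pV : PartialOrder V :=
    { le := fun a b => a = b ∨ Relation.TransGen r a b
      le_refl := fun a => Or.inl rfl
      le_trans := by
        rintro a b c (rfl | h) (rfl | h')
        · exact Or.inl rfl
        · exact Or.inr h'
        · exact Or.inr h
        · exact Or.inr (h.trans h')
      le_antisymm := by
        rintro a b (rfl | h) hba
        · rfl
        · rcases hba with rfl | h'
          · rfl
          · exact absurd (h.trans h') (hacyc a) }
    letI : Fintype (LinearExtension V) := inferInstanceAs (Fintype V)
    letI : DecidableEq (LinearExtension V) := inferInstanceAs (DecidableEq V)
    have hmono : ∀ a b : V, Relation.TransGen r a b →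
        (toLinearExtension a : LinearExtension V) < toLinearExtension b := by
      intro a b hab
      have hne : toLinearExtension a ≠ toLinearExtension b := by
        intro e
        have e' : a = b := e
        exact hacyc b (e' ▸ hab)
      exact lt_of_le_of_ne ((toLinearExtension (α := V)).monotone' (Or.inr hab)) hne
    let B' : Matrix (LinearExtension V) (LinearExtension V) ℝ := B
    have key : IsUnit (1 - B') := by
      apply isUnit_one_sub_of_lt
      intro i j h
      exact hmono j i (Relation.TransGen.single (hsupp j i h))
    exact key
  have hdetu : IsUnit ((1 : Matrix V V ℝ) - B).det := (Matrix.isUnit_iff_isUnit_det _).1 hu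
  have hinv1 : ((1 : Matrix V V ℝ) - B) * (1 - B)⁻¹ = 1 := Matrix.mul_nonsing_inv _ hdetu
  have hkey : ((1 : Matrix V V ℝ) - B) * (Sig * (1 - B)ᵀ) = Om := by
    have h3 : (((1 : Matrix V V ℝ) - B)ᵀ)⁻¹ * (1 - B)ᵀ = 1 :=
      Matrix.nonsing_inv_mul _ (by rwa [Matrix.det_transpose])
    have h2 : Sig * ((1 : Matrix V V ℝ) - B)ᵀ = (1 - B)⁻¹ * Om := by
      calc Sig * ((1 : Matrix V V ℝ) - B)ᵀ
          = (1 - B)⁻¹ * Om * ((((1 : Matrix V V ℝ) - B)ᵀ)⁻¹ * (1 - B)ᵀ) := by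
            rw [hSig, Matrix.transpose_nonsing_inv, Matrix.mul_assoc]
        _ = (1 - B)⁻¹ * Om := by rw [h3, Matrix.mul_one]
    rw [h2, ← Matrix.mul_assoc, hinv1, Matrix.one_mul]
  have hBzero : ∀ u : V, u ∉ C → B v u = 0 := by
    intro u hu'
    by_contra h
    exact hu' (hpa u h)
  set y : V → ℝ := fun w => (Sig * ((1 : Matrix V V ℝ) - B)ᵀ) w v with hy
  have hyS : ∀ a ∈ A, y a = S a v - ∑ c ∈ C, S a c * B v c := by
    intro a ha
    have h1 : y a = Sig a v - ∑ u : V, Sig a u * B v u := by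
      simp only [hy, Matrix.mul_apply, Matrix.transpose_apply, Matrix.sub_apply, mul_sub]
      rw [Finset.sum_sub_distrib]
      congr 1
      simp [Matrix.one_apply, mul_ite, mul_one, mul_zero]
    have h2 : ∑ u : V, Sig a u * B v u = ∑ c ∈ C, Sig a c * B v c :=
      (Finset.sum_subset (Finset.subset_univ C)
        (fun x _ hx => by rw [hBzero x hx, mul_zero])).symm
    rw [h1, h2, hS a (Finset.mem_insert_of_mem ha) v (Finset.mem_insert_self v A)]
    congr 1
    refine Finset.sum_congr rfl (fun c hc => ?_)
    rw [hS a (Finset.mem_insert_of_mem ha) c (Finset.mem_insert_of_mem (hCA c hc))]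
  have hvanish : ∀ c ∈ C, ∑ a ∈ A, ((1 : Matrix V V ℝ) - B) c a * y a = 0 := by
    intro c hc
    have hzero : ∀ w : V, w ∉ A → ((1 : Matrix V V ℝ) - B) c w = 0 := by
      intro w hw
      have hne : c ≠ w := fun e => hw (e ▸ hCA c hc)
      have hB0 : B c w = 0 := by
        by_contra h
        exact hw ((hA w).2 ⟨c, hc, Relation.ReflTransGen.single (hsupp w c h)⟩)
      simp [Matrix.sub_apply, Matrix.one_apply_ne hne, hB0]
    have hfull : ∑ a ∈ A, ((1 : Matrix V V ℝ) - B) c a * y a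
        = ∑ w : V, ((1 : Matrix V V ℝ) - B) c w * y w := by
      refine Finset.sum_subset (Finset.subset_univ A) ?_
      intro x _ hx
      rw [hzero x hx, zero_mul]
    have hOw : Om c v = 0 := by rw [hOm.apply v c]; exact hOmv c hc
    calc ∑ a ∈ A, ((1 : Matrix V V ℝ) - B) c a * y a
        = ∑ w : V, ((1 : Matrix V V ℝ) - B) c w * y w := hfull
      _ = (((1 : Matrix V V ℝ) - B) * (Sig * ((1 : Matrix V V ℝ) - B)ᵀ)) c v := by
          simp [Matrix.mul_apply, hy]
      _ = Om c v := by rw [hkey]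
      _ = 0 := hOw
  -- the key vector identity
  have hvec : (msub (1 - D) C A * msub S A C) *ᵥ (fun c : ↥C => B v (c : V))
      = msub (1 - D) C A *ᵥ (fun a : ↥A => S (a : V) v) := by
    rw [← Matrix.mulVec_mulVec]
    funext c
    simp only [Matrix.mulVec, dotProduct, msub, Matrix.submatrix_apply]
    have hterm : ∀ a : ↥A,
        (1 - D) (c : V) (a : V) * (S (a : V) v - ∑ c' : ↥C, S (a : V) (c' : V) * B v (c' : V))
          = ((1 : Matrix V V ℝ) - B) (c : V) (a : V) * y (a : V) := by
      intro a
      have h1 : (1 - D) (c : V) (a : V) = ((1 : Matrix V V ℝ) - B) (c : V) (a : V) := by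
        simp [Matrix.sub_apply, hD _ a.2 _ a.2, hD (c : V) (hCA c c.2) (a : V) a.2]
      have h2 : ∑ c' : ↥C, S (a : V) (c' : V) * B v (c' : V)
          = ∑ c' ∈ C, S (a : V) c' * B v c' :=
        Finset.sum_coe_sort C (fun c' => S (a : V) c' * B v c')
      rw [h1, h2, hyS (a : V) a.2]
    have hsum : ∑ a : ↥A, ((1 : Matrix V V ℝ) - B) (c : V) (a : V) * y (a : V) = 0 := by
      rw [Finset.sum_coe_sort A (fun a => ((1 : Matrix V V ℝ) - B) (c : V) a * y a)]
      exact hvanish c c.2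
    have hz : ∑ a : ↥A,
        (1 - D) (c : V) (a : V) * (S (a : V) v - ∑ c' : ↥C, S (a : V) (c' : V) * B v (c' : V))
        = 0 := by
      rw [Finset.sum_congr rfl (fun a _ => hterm a)]
      exact hsum
    simp only [mul_sub] at hz
    rw [Finset.sum_sub_distrib, sub_eq_zero] at hz
    exact hz.symm
  have hNdet : IsUnit (msub (1 - D) C A * msub S A C).det :=
    (Matrix.isUnit_iff_isUnit_det _).1 hinv
  have hNinv : (msub (1 - D) C A * msub S A C)⁻¹ * (msub (1 - D) C A * msub S A C) = 1 :=
    Matrix.nonsing_inv_mul _ hNdet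
  unfold delta
  rw [← Matrix.mulVec_mulVec, ← hvec, Matrix.mulVec_mulVec, hNinv, Matrix.one_mulVec]
end

section
/- Let V be a finite set, E ⊆ V × V an acyclic relation, B ∈ ℝ^{V×V} supported on E, and Σ = (I−B)^{-1} Ω (I−B)^{-T} for symmetric Ω. Let v ∈ V, let C, A, S, D satisfy the hypotheses: pa(v) ⊆ C ⊆ an(v), Ω_{vu} = 0 for u ∈ C, A = An(C), D_{A,A} = B_{A,A} and D_{A, V∖A} = 0, S agrees with Σ on (A∪{v}) × (A∪{v}), and (I−D)_{C,A} S_{A,C} is invertible. Let ε be an integrable random vector with E[ε] = 0 such that the random vector ε_C = (ε_c)_{c∈C} is independent of ε_v, and set Y = (I−B)^{-1}ε. Then for every c ∈ C the residuals satisfy γ_c(D) := Y_c − Σ_{w∈V} D_{cw} Y_w = ε_c and γ_v(C,S,D) := Y_v − δ_v(C, An(C), S, D) Y_C = ε_v; hence γ_c(D) is independent of γ_v(C,S,D), and for any integer K ≥ 2 with E[|ε_c|^{K−1}] < ∞ and E[|ε_v|] < ∞ one has E[γ_c(D)^{K−1} γ_v(C,S,D)] = 0. -/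
open Matrix MeasureTheory ProbabilityTheory

lemma det_one_sub_acyclic {V : Type*} [Fintype V] [DecidableEq V]
    (r : V → V → Prop) (hacyc : ∀ v : V, ¬ Relation.TransGen r v v)
    (B : Matrix V V ℝ) (hsupp : ∀ u v : V, B v u ≠ 0 → r u v) :
    (1 - B).det = 1 := by
  classical
  set b : V → ℕ := fun w => (Finset.univ.filter fun x => Relation.TransGen r w x).card with hb
  have hmono : ∀ u w : V, Relation.TransGen r u w → b w < b u := by
    intro u w h
    apply Finset.card_lt_card
    constructor
    · intro x hx
      simp only [Finset.mem_filter, Finset.mem_univ, true_and] at hx ⊢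
      exact h.trans hx
    · intro hsub
      have : w ∈ Finset.univ.filter fun x => Relation.TransGen r u x := by
        simp [h]
      have := hsub this
      simp only [Finset.mem_filter, Finset.mem_univ, true_and] at this
      exact hacyc w this
  have hBzero : ∀ i j : V, ¬ b i < b j → B i j = 0 := by
    intro i j h
    by_contra hne
    exact h (hmono j i (Relation.TransGen.single (hsupp j i hne)))
  have hBT : (1 - B).BlockTriangular b := by
    apply Matrix.blockTriangular_one.sub
    intro i j hij
    exact hBzero i j (not_lt_of_gt hij)
  rw [hBT.det]
  apply Finset.prod_eq_one
  intro k _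
  have : (1 - B).toSquareBlock b k = 1 := by
    ext i j
    simp only [Matrix.toSquareBlock_def, Matrix.sub_apply, Matrix.one_apply]
    have hB0 : B (i : V) (j : V) = 0 := by
      apply hBzero
      have : b (i : V) = b (j : V) := by
        have h1 := i.2; have h2 := j.2
        have h1 : b (i : V) = k := h1; have h2 : b (j : V) = k := h2
        rw [h1, h2]
      omega
    rcases eq_or_ne i j with h | h
    · subst h; simp [hB0]
    · have : (i : V) ≠ (j : V) := fun hh => h (Subtype.ext hh)
      simp [this, h, hB0]
  rw [this, Matrix.det_one]

/-- under the hypotheses of the debiased-direct-effect lemma, with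
`D_{A,A} = B_{A,A}`, `D_{A,V∖A} = 0`, and an integrable mean-zero error vector `ε` whose
subvector `ε_C` is independent of `ε_v`, the residuals satisfy `γ_c(D) = ε_c` and
`γ_v(C,S,D) = ε_v`; hence `γ_c(D)` is independent of `γ_v(C,S,D)` and, for any `K ≥ 2`
with `E[|ε_c|^{K−1}] < ∞`, one has `E[γ_c(D)^{K−1} γ_v(C,S,D)] = 0`. -/
theorem stmt_10 {V : Type*} [Fintype V] [DecidableEq V]
    (r : V → V → Prop) (hacyc : ∀ v : V, ¬ Relation.TransGen r v v)
    (B : Matrix V V ℝ) (hsupp : ∀ u v : V, B v u ≠ 0 → r u v)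
    (Om : Matrix V V ℝ) (hOm : Om.IsSymm)
    (Sig : Matrix V V ℝ) (hSig : Sig = (1 - B)⁻¹ * Om * ((1 - B)⁻¹)ᵀ)
    (v : V) (C A : Finset V) (hvC : v ∉ C) (hvA : v ∉ A)
    (hpa : ∀ u : V, B v u ≠ 0 → u ∈ C)
    (hCan : ∀ c ∈ C, Relation.TransGen r c v)
    (hOmv : ∀ u ∈ C, Om v u = 0)
    (hA : ∀ w : V, w ∈ A ↔ ∃ c ∈ C, Relation.ReflTransGen r w c)
    (D : Matrix V V ℝ) (hD : ∀ a ∈ A, ∀ a' ∈ A, D a a' = B a a')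
    (hD0 : ∀ a ∈ A, ∀ w : V, w ∉ A → D a w = 0)
    (S : Matrix V V ℝ)
    (hS : ∀ i ∈ insert v A, ∀ j ∈ insert v A, S i j = Sig i j)
    (hinv : IsUnit (msub (1 - D) C A * msub S A C))
    {Ω : Type*} [MeasureSpace Ω] [IsProbabilityMeasure (volume : Measure Ω)]
    (ε : Ω → V → ℝ)
    (hint : ∀ w : V, Integrable fun ω => ε ω w)
    (hmean : ∀ w : V, ∫ ω, ε ω w = 0)
    (hindep : IndepFun (fun ω => fun c : ↥C => ε ω (c : V)) (fun ω => ε ω v) volume)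
    (Y : Ω → V → ℝ) (hY : ∀ ω, Y ω = (1 - B)⁻¹ *ᵥ ε ω) :
    ∀ c ∈ C,
      (∀ ω, Y ω c - ∑ w : V, D c w * Y ω w = ε ω c) ∧
      (∀ ω, Y ω v - ∑ u : ↥C, delta v C A S D u * Y ω (u : V) = ε ω v) ∧
      IndepFun (fun ω => Y ω c - ∑ w : V, D c w * Y ω w)
        (fun ω => Y ω v - ∑ u : ↥C, delta v C A S D u * Y ω (u : V)) volume ∧
      ∀ K : ℕ, 2 ≤ K →
        Integrable (fun ω => |ε ω c| ^ (K - 1)) →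
        ∫ ω, (Y ω c - ∑ w : V, D c w * Y ω w) ^ (K - 1) *
            (Y ω v - ∑ u : ↥C, delta v C A S D u * Y ω (u : V)) = 0 := by
  classical
  have hdet : IsUnit (1 - B).det := by
    rw [det_one_sub_acyclic r hacyc B hsupp]; exact isUnit_one
  have hmulinv : (1 - B) * (1 - B)⁻¹ = 1 := Matrix.mul_nonsing_inv _ hdet
  have hCA : ∀ c ∈ C, c ∈ A := fun c hc => (hA c).mpr ⟨c, hc, Relation.ReflTransGen.refl⟩
  have hεY : ∀ ω, (1 - B) *ᵥ Y ω = ε ω := by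
    intro ω
    rw [hY ω, Matrix.mulVec_mulVec, hmulinv, Matrix.one_mulVec]
  -- entries of 1 - B vanish from A to outside A
  have hBArow : ∀ c ∈ A, ∀ w : V, w ∉ A → (1 - B) c w = 0 := by
    intro c hc w hw
    have hBcw : B c w = 0 := by
      by_contra hne
      exact hw ((hA w).mpr (((hA c).mp hc).imp fun c' ⟨hc', hrt⟩ =>
        ⟨hc', (Relation.ReflTransGen.single (hsupp w c hne)).trans hrt⟩))
    have : c ≠ w := fun h => hw (h ▸ hc)
    simp [Matrix.sub_apply, Matrix.one_apply, this, hBcw]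
  -- expansion of residual in terms of B
  have hres : ∀ (x : V) (ω : Ω), Y ω x - ∑ w : V, B x w * Y ω w = ε ω x := by
    intro x ω
    have := congrFun (hεY ω) x
    simpa [Matrix.mulVec, dotProduct, Matrix.sub_apply, Matrix.one_apply, sub_mul,
      Finset.sum_sub_distrib, Finset.sum_ite_eq] using this
  -- the delta vector equals B v ·
  have hdelta : delta v C A S D = fun u : ↥C => B v (u : V) := by
    set M := msub (1 - D) C A * msub S A C with hM
    have hMdet : IsUnit M.det := (Matrix.isUnit_iff_isUnit_det _).mp hinv
    set N := (1 - B)⁻¹ * Om with hN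
    have stepA : ∀ a ∈ A, S a v - ∑ u : ↥C, S a (u : V) * B v (u : V) = N a v := by
      intro a ha
      have hSv : S a v = Sig a v :=
        hS a (Finset.mem_insert_of_mem ha) v (Finset.mem_insert_self v A)
      have hSu : ∀ u ∈ C, S a u = Sig a u := fun u hu =>
        hS a (Finset.mem_insert_of_mem ha) u (Finset.mem_insert_of_mem (hCA u hu))
      have hsum : ∑ u : ↥C, S a (u : V) * B v (u : V) = ∑ w : V, Sig a w * B v w := by
        rw [Finset.sum_coe_sort C (fun u => S a u * B v u)]
        rw [Finset.sum_congr rfl fun u hu => by rw [hSu u hu]]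
        apply Finset.sum_subset (Finset.subset_univ C)
        intro w _ hw
        have : B v w = 0 := by by_contra hne; exact hw (hpa w hne)
        simp [this]
      have hSigeq : Sig * (1 - B)ᵀ = N := by
        rw [hSig, hN, mul_assoc, ← Matrix.transpose_mul, hmulinv, Matrix.transpose_one, mul_one]
      have := congrFun (congrFun hSigeq a) v
      rw [Matrix.mul_apply] at this
      rw [hSv, hsum, ← this]
      simp [Matrix.transpose_apply, Matrix.sub_apply, Matrix.one_apply, mul_sub,
        Finset.sum_sub_distrib, Finset.sum_ite_eq', hvA, mul_comm]
    have stepBC : ∀ c ∈ C, ∑ a : ↥A, (1 - D) (c : V) (a : V) * N (a : V) v = 0 := by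
      intro c hc
      have h1 : ∑ a : ↥A, (1 - D) c (a : V) * N (a : V) v
          = ∑ w : V, (1 - B) c w * N w v := by
        rw [Finset.sum_coe_sort A (fun a => (1 - D) c a * N a v)]
        rw [Finset.sum_congr rfl (fun a ha => by
          rw [show (1 - D) c a = (1 - B) c a by
            simp [Matrix.sub_apply, hD c (hCA c hc) a ha]])]
        apply Finset.sum_subset (Finset.subset_univ A)
        intro w _ hw
        rw [hBArow c (hCA c hc) w hw, zero_mul]
      rw [h1]
      have h2 : (1 - B) * N = Om := by
        rw [hN, ← mul_assoc, hmulinv, one_mul]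
      have := congrFun (congrFun h2 c) v
      rw [Matrix.mul_apply] at this
      rw [this, ← hOm.apply, hOmv c hc]
    have hMdet' : M.det ≠ 0 := hMdet.ne_zero
    have hMv : msub (1 - D) C A *ᵥ (fun a : ↥A => S (a : V) v)
        = M *ᵥ (fun u : ↥C => B v (u : V)) := by
      rw [hM, ← Matrix.mulVec_mulVec]
      ext c
      simp only [Matrix.mulVec, dotProduct]
      rw [← sub_eq_zero, ← Finset.sum_sub_distrib]
      have := stepBC c c.2
      rw [← this]
      apply Finset.sum_congr rfl
      intro a _
      simp only [msub, Matrix.submatrix_apply, Matrix.mulVec, dotProduct]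
      rw [← mul_sub, stepA a a.2]
    ext u
    rw [delta, ← Matrix.mulVec_mulVec, hMv, Matrix.mulVec_mulVec, ← hM,
      Matrix.nonsing_inv_mul M hMdet, Matrix.one_mulVec]
  -- main conclusions
  intro c hc
  have hcA : c ∈ A := hCA c hc
  have part1 : ∀ ω, Y ω c - ∑ w : V, D c w * Y ω w = ε ω c := by
    intro ω
    have hsum : ∑ w : V, D c w * Y ω w = ∑ w : V, B c w * Y ω w := by
      apply Finset.sum_congr rfl
      intro w _
      by_cases hw : w ∈ A
      · rw [hD c hcA w hw]
      · rw [hD0 c hcA w hw]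
        have : B c w = 0 := by
          have h := hBArow c hcA w hw
          simp only [Matrix.sub_apply, Matrix.one_apply] at h
          by_cases hcw : c = w
          · exact absurd (hcw ▸ hcA) hw
          · simpa [hcw] using h
        rw [this]
    rw [hsum, hres c ω]
  have part2 : ∀ ω, Y ω v - ∑ u : ↥C, delta v C A S D u * Y ω (u : V) = ε ω v := by
    intro ω
    have hsum : ∑ u : ↥C, delta v C A S D u * Y ω (u : V) = ∑ w : V, B v w * Y ω w := by
      rw [hdelta]
      rw [Finset.sum_coe_sort C (fun u => B v u * Y ω u)]
      apply Finset.sum_subset (Finset.subset_univ C)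
      intro w _ hw
      have : B v w = 0 := by by_contra hne; exact hw (hpa w hne)
      rw [this, zero_mul]
    rw [hsum, hres v ω]
  have hfun1 : (fun ω => Y ω c - ∑ w : V, D c w * Y ω w) = fun ω => ε ω c :=
    funext part1
  have hfun2 : (fun ω => Y ω v - ∑ u : ↥C, delta v C A S D u * Y ω (u : V))
      = fun ω => ε ω v := funext part2
  have hindcv : IndepFun (fun ω => ε ω c) (fun ω => ε ω v) volume := by
    have : (fun ω => ε ω c)
        = (fun x : ↥C → ℝ => x ⟨c, hc⟩) ∘ (fun ω => fun u : ↥C => ε ω (u : V)) := rfl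
    rw [this]
    exact hindep.comp (measurable_pi_apply ⟨c, hc⟩) measurable_id
  refine ⟨part1, part2, ?_, ?_⟩
  · rw [hfun1, hfun2]; exact hindcv
  · intro K hK hintK
    simp only [part1, part2]
    have hind2 : IndepFun (fun ω => ε ω c ^ (K - 1)) (fun ω => ε ω v) volume :=
      hindcv.comp (measurable_id.pow_const (K - 1)) measurable_id
    have hi1 : Integrable (fun ω => ε ω c ^ (K - 1)) := by
      apply hintK.mono' ((hint c).aestronglyMeasurable.pow _)
      filter_upwards with ω
      simp [Pi.pow_apply, abs_pow, Real.norm_eq_abs]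
    have h := hind2.integral_mul_eq_mul_integral hi1.aestronglyMeasurable (hint v).aestronglyMeasurable
    have goal_eq : (fun ω => ε ω c ^ (K - 1) * ε ω v)
        = (fun ω => ε ω c ^ (K - 1)) * (fun ω => ε ω v) := rfl
    show ∫ ω, (fun ω => ε ω c ^ (K - 1) * ε ω v) ω = 0
    rw [goal_eq, h, hmean v, mul_zero]
end

section
/- Let V be a finite set, v ∈ V, and let C₁ ⊆ A₁ ⊆ A ⊆ V ∖ {v}. Let S, D ∈ ℝ^{V×V} with D_{C₁, A∖A₁} = 0 (every entry of D with row in C₁ and column in A∖A₁ is zero), and suppose (I−D)_{C₁,A₁} S_{A₁,C₁} is invertible. Then (I−D)_{C₁,A} S_{A,C₁} = (I−D)_{C₁,A₁} S_{A₁,C₁}, (I−D)_{C₁,A} S_{A,v} = (I−D)_{C₁,A₁} S_{A₁,v}, and consequently δ_v(C₁, A, S, D) = δ_v(C₁, A₁, S, D). -/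
open Matrix

private lemma sum_reduce {V : Type*} [Fintype V] [DecidableEq V]
    (C₁ A₁ A : Finset V) (hC₁A₁ : C₁ ⊆ A₁) (hA₁A : A₁ ⊆ A)
    (S D : Matrix V V ℝ)
    (hD0 : ∀ c ∈ C₁, ∀ a ∈ A, a ∉ A₁ → D c a = 0)
    (c : ↥C₁) (g : V → ℝ) :
    ∑ a : ↥A, (1 - D) (c : V) (a : V) * g (a : V)
      = ∑ a : ↥A₁, (1 - D) (c : V) (a : V) * g (a : V) := by
  rw [Finset.sum_coe_sort A (fun a => (1 - D) (c : V) a * g a),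
    Finset.sum_coe_sort A₁ (fun a => (1 - D) (c : V) a * g a)]
  refine (Finset.sum_subset hA₁A ?_).symm
  intro a haA haA₁
  have hne : (c : V) ≠ a := fun h => haA₁ (h ▸ hC₁A₁ c.2)
  simp [Matrix.sub_apply, Matrix.one_apply_ne hne, hD0 c c.2 a haA haA₁]

/-- for `C₁ ⊆ A₁ ⊆ A ⊆ V ∖ {v}` and `D_{C₁, A∖A₁} = 0`, with
`(I−D)_{C₁,A₁} S_{A₁,C₁}` invertible:
`(I−D)_{C₁,A} S_{A,C₁} = (I−D)_{C₁,A₁} S_{A₁,C₁}`,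
`(I−D)_{C₁,A} S_{A,v} = (I−D)_{C₁,A₁} S_{A₁,v}`, and
`δ_v(C₁, A, S, D) = δ_v(C₁, A₁, S, D)`. -/
theorem stmt_11 {V : Type*} [Fintype V] [DecidableEq V]
    (v : V) (C₁ A₁ A : Finset V)
    (hC₁A₁ : C₁ ⊆ A₁) (hA₁A : A₁ ⊆ A) (hvA : v ∉ A)
    (S D : Matrix V V ℝ)
    (hD0 : ∀ c ∈ C₁, ∀ a ∈ A, a ∉ A₁ → D c a = 0)
    (hinv : IsUnit (msub (1 - D) C₁ A₁ * msub S A₁ C₁)) :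
    msub (1 - D) C₁ A * msub S A C₁ = msub (1 - D) C₁ A₁ * msub S A₁ C₁ ∧
    (msub (1 - D) C₁ A *ᵥ fun a : ↥A => S (a : V) v) =
      (msub (1 - D) C₁ A₁ *ᵥ fun a : ↥A₁ => S (a : V) v) ∧
    delta v C₁ A S D = delta v C₁ A₁ S D := by
  have h1 : msub (1 - D) C₁ A * msub S A C₁ = msub (1 - D) C₁ A₁ * msub S A₁ C₁ := by
    ext c c'
    simpa [Matrix.mul_apply, msub, Matrix.submatrix_apply] using
      sum_reduce C₁ A₁ A hC₁A₁ hA₁A S D hD0 c (fun a => S a (c' : V))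
  have h2 : (msub (1 - D) C₁ A *ᵥ fun a : ↥A => S (a : V) v) =
      (msub (1 - D) C₁ A₁ *ᵥ fun a : ↥A₁ => S (a : V) v) := by
    ext c
    simpa [Matrix.mulVec, dotProduct, msub, Matrix.submatrix_apply] using
      sum_reduce C₁ A₁ A hC₁A₁ hA₁A S D hD0 c (fun a => S a v)
  refine ⟨h1, h2, ?_⟩
  unfold delta
  rw [← Matrix.mulVec_mulVec, ← Matrix.mulVec_mulVec, h1, h2]
end

section
/- Let V be a finite set, E ⊆ V × V an acyclic relation, B ∈ ℝ^{V×V} supported on E, Ω symmetric, and Σ = (I−B)^{-1} Ω (I−B)^{-T}. Let v ∈ V and C ⊆ V∖{v} with pa(v) ⊆ C ⊆ an(v) and Ω_{vu} = 0 for all u ∈ C; let D ∈ ℝ^{V×V} with D_{An(C),An(C)} = B_{An(C),An(C)} and D_{An(C), V∖An(C)} = 0, and let S agree with Σ on (An(C)∪{v}) × (An(C)∪{v}). Let q ∈ C with B_{vq} = 0, and assume the matrices (I−D)_{C',An(C')} S_{An(C'),C'} are invertible for C' = C and C' = C∖{q}. Let ε be an integrable mean-zero random vector with ε_C independent of ε_v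 and Y = (I−B)^{-1}ε. Then δ_v(C∖{q}, An(C∖{q}), S, D) = B_{v,C∖{q}}, the residual Y_v − δ_v(C∖{q}, An(C∖{q}), S, D) Y_{C∖{q}} equals ε_v, and for any integer K ≥ 2 with the required moments finite, E[(Y_q − Σ_w D_{qw}Y_w)^{K−1} (Y_v − δ_v(C∖{q}, An(C∖{q}), S, D) Y_{C∖{q}})] = E[ε_q^{K−1} ε_v] = 0. -/
open Matrix MeasureTheory ProbabilityTheory

/-- under the hypotheses of the debiased-direct-effect lemma, if `q ∈ C`
with `B_{vq} = 0`, then removing `q` from `C` still recovers the direct effects: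
`δ_v(C∖{q}, An(C∖{q}), S, D) = B_{v,C∖{q}}`, the corresponding residual of `v` equals
`ε_v`, and for any `K ≥ 2` with the required moments finite,
`E[γ_q(D)^{K−1} γ_v(C∖{q},S,D)] = E[ε_q^{K−1} ε_v] = 0`. -/
theorem stmt_12 {V : Type*} [Fintype V] [DecidableEq V]
    (r : V → V → Prop) (hacyc : ∀ v : V, ¬ Relation.TransGen r v v)
    (B : Matrix V V ℝ) (hsupp : ∀ u v : V, B v u ≠ 0 → r u v)
    (Om : Matrix V V ℝ) (hOm : Om.IsSymm)
    (Sig : Matrix V V ℝ) (hSig : Sig = (1 - B)⁻¹ * Om * ((1 - B)⁻¹)ᵀ)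
    (v : V) (C : Finset V) (hvC : v ∉ C)
    (hpa : ∀ u : V, B v u ≠ 0 → u ∈ C)
    (hCan : ∀ c ∈ C, Relation.TransGen r c v)
    (hOmv : ∀ u ∈ C, Om v u = 0)
    -- `A = An(C)` and `A' = An(C ∖ {q})`
    (A A' : Finset V)
    (hA : ∀ w : V, w ∈ A ↔ ∃ c ∈ C, Relation.ReflTransGen r w c)
    (q : V) (hq : q ∈ C) (hBvq : B v q = 0)
    (hA' : ∀ w : V, w ∈ A' ↔ ∃ c ∈ C.erase q, Relation.ReflTransGen r w c)
    (D : Matrix V V ℝ)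
    (hD : ∀ a ∈ A, ∀ a' ∈ A, D a a' = B a a')
    (hD0 : ∀ a ∈ A, ∀ w : V, w ∉ A → D a w = 0)
    (S : Matrix V V ℝ)
    (hS : ∀ i ∈ insert v A, ∀ j ∈ insert v A, S i j = Sig i j)
    (hinv : IsUnit (msub (1 - D) C A * msub S A C))
    (hinv' : IsUnit (msub (1 - D) (C.erase q) A' * msub S A' (C.erase q)))
    {Ω : Type*} [MeasureSpace Ω] [IsProbabilityMeasure (volume : Measure Ω)]
    (ε : Ω → V → ℝ)
    (hint : ∀ w : V, Integrable fun ω => ε ω w)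
    (hmean : ∀ w : V, ∫ ω, ε ω w = 0)
    (hindep : IndepFun (fun ω => fun c : ↥C => ε ω (c : V)) (fun ω => ε ω v) volume)
    (Y : Ω → V → ℝ) (hY : ∀ ω, Y ω = (1 - B)⁻¹ *ᵥ ε ω) :
    (delta v (C.erase q) A' S D = fun c : ↥(C.erase q) => B v (c : V)) ∧
    (∀ ω, Y ω v - ∑ c : ↥(C.erase q), delta v (C.erase q) A' S D c * Y ω (c : V) = ε ω v) ∧
    ∀ K : ℕ, 2 ≤ K →
      Integrable (fun ω => |ε ω q| ^ (K - 1)) →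
      (∫ ω, (Y ω q - ∑ w : V, D q w * Y ω w) ^ (K - 1) *
            (Y ω v - ∑ c : ↥(C.erase q), delta v (C.erase q) A' S D c * Y ω (c : V)))
          = ∫ ω, (ε ω q) ^ (K - 1) * ε ω v ∧
      (∫ ω, (ε ω q) ^ (K - 1) * ε ω v) = 0 := by
  classical
  -- a rank function for the acyclic relation
  set ρ : V → ℕ := fun u => (Finset.univ.filter (fun w => Relation.TransGen r w u)).card with hρdef
  have hρ : ∀ u w : V, r u w → ρ u < ρ w := by
    intro u w huw
    apply Finset.card_lt_card
    constructor
    · intro x hx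
      simp only [Finset.mem_filter, Finset.mem_univ, true_and] at hx ⊢
      exact hx.tail huw
    · intro hsub
      have hu : u ∈ Finset.univ.filter (fun w' => Relation.TransGen r w' w) := by
        simp [Relation.TransGen.single huw]
      have := hsub hu
      simp only [Finset.mem_filter, Finset.mem_univ, true_and] at this
      exact hacyc u this
  have hpow : ∀ k : ℕ, ∀ i j : V, (B ^ k) i j ≠ 0 → ρ j + k ≤ ρ i := by
    intro k
    induction k with
    | zero =>
      intro i j h
      have hij : i = j := by
        by_contra hne
        rw [pow_zero, Matrix.one_apply_ne hne] at h
        exact h rfl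
      simp [hij]
    | succ k ih =>
      intro i j h
      rw [pow_succ, Matrix.mul_apply] at h
      obtain ⟨w, _, hw⟩ := Finset.exists_ne_zero_of_sum_ne_zero h
      have h1 := ih i w (left_ne_zero_of_mul hw)
      have h2 : r j w := hsupp j w (right_ne_zero_of_mul hw)
      have := hρ j w h2
      omega
  have hnilB : IsUnit (1 - B) := by
    refine IsNilpotent.isUnit_one_sub ⟨Fintype.card V + 1, ?_⟩
    ext i j
    simp only [Matrix.zero_apply]
    by_contra h0
    have h1 := hpow (Fintype.card V + 1) i j h0
    have h2 : ρ i ≤ Fintype.card V := by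
      calc ρ i ≤ Finset.univ.card := Finset.card_filter_le _ _
        _ = Fintype.card V := Finset.card_univ
    omega
  have hdet : IsUnit (1 - B).det := (Matrix.isUnit_iff_isUnit_det _).mp hnilB
  have hZ1 : (1 - B) * (1 - B)⁻¹ = 1 := Matrix.mul_nonsing_inv _ hdet
  have hZ2 : (1 - B)⁻¹ * (1 - B) = 1 := Matrix.nonsing_inv_mul _ hdet
  -- subset facts
  have hCA : ∀ c ∈ C, c ∈ A := fun c hc => (hA c).mpr ⟨c, hc, Relation.ReflTransGen.refl⟩
  have hC'A' : ∀ c ∈ C.erase q, c ∈ A' := fun c hc =>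
    (hA' c).mpr ⟨c, hc, Relation.ReflTransGen.refl⟩
  have hA'A : ∀ a ∈ A', a ∈ A := by
    intro a ha
    rcases (hA' a).mp ha with ⟨c, hc, hpath⟩
    exact (hA a).mpr ⟨c, Finset.mem_of_mem_erase hc, hpath⟩
  have hAanc : ∀ a ∈ A, ∀ w, r w a → w ∈ A := by
    intro a ha w hw
    rcases (hA a).mp ha with ⟨c, hc, hp⟩
    exact (hA w).mpr ⟨c, hc, hp.head hw⟩
  have hA'anc : ∀ a ∈ A', ∀ w, r w a → w ∈ A' := by
    intro a ha w hw
    rcases (hA' a).mp ha with ⟨c, hc, hp⟩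
    exact (hA' w).mpr ⟨c, hc, hp.head hw⟩
  -- entry identities
  have hDB' : ∀ a ∈ A, ∀ w, D a w = B a w := by
    intro a ha w
    by_cases hw : w ∈ A
    · exact hD a ha w hw
    · rw [hD0 a ha w hw]
      by_contra hB
      exact hw (hAanc a ha w (hsupp w a fun h => hB h.symm))
  have hDB : ∀ a ∈ A, ∀ w, (1 - D) a w = (1 - B) a w := by
    intro a ha w
    simp only [Matrix.sub_apply, hDB' a ha w]
  have hBA' : ∀ a ∈ A', ∀ w, w ∉ A' → B a w = 0 := by
    intro a ha w hw
    by_contra hB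
    exact hw (hA'anc a ha w (hsupp w a hB))
  have hBv : ∀ u, u ∉ C.erase q → B v u = 0 := by
    intro u hu
    by_contra h
    have huC := hpa u h
    have huq : u = q := by
      by_contra hne
      exact hu (Finset.mem_erase.mpr ⟨hne, huC⟩)
    exact h (huq ▸ hBvq)
  -- Σ (1-B)ᵀ = (1-B)⁻¹ Ω
  have hSO : Sig * (1 - B)ᵀ = (1 - B)⁻¹ * Om := by
    rw [hSig, Matrix.mul_assoc, ← Matrix.transpose_mul, hZ1, Matrix.transpose_one,
      Matrix.mul_one]
  have hZOm : (1 - B) * ((1 - B)⁻¹ * Om) = Om := by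
    rw [← Matrix.mul_assoc, hZ1, Matrix.one_mul]
  -- key vector identity
  have hstar : ∀ a ∈ A,
      S a v - ∑ c : ↥(C.erase q), S a (c : V) * B v (c : V) = ((1 - B)⁻¹ * Om) a v := by
    intro a ha
    have hav : a ∈ insert v A := Finset.mem_insert_of_mem ha
    have h1 : S a v = Sig a v := hS a hav v (Finset.mem_insert_self v A)
    have h2 : ∑ c : ↥(C.erase q), S a (c : V) * B v (c : V)
        = ∑ u : V, Sig a u * B v u := by
      rw [Finset.sum_coe_sort (C.erase q) (fun u => S a u * B v u)]
      rw [Finset.sum_congr rfl (fun u hu => by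
        rw [hS a hav u (Finset.mem_insert_of_mem (hCA u (Finset.mem_of_mem_erase hu)))])]
      exact Finset.sum_subset (Finset.subset_univ _) fun u _ hu => by
        rw [hBv u hu, mul_zero]
    rw [h1, h2, ← hSO]
    simp only [Matrix.mul_apply, Matrix.transpose_apply, Matrix.sub_apply, mul_sub,
      Finset.sum_sub_distrib, Matrix.one_apply]
    congr 1
    simp
  have hkey2 : ∀ c ∈ C.erase q,
      ∑ a : ↥A', (1 - D) c (a : V) * ((1 - B)⁻¹ * Om) (a : V) v = 0 := by
    intro c hc
    have hcA' := hC'A' c hc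
    have hcA := hA'A c hcA'
    have hstep : ∑ a : ↥A', (1 - D) c (a : V) * ((1 - B)⁻¹ * Om) (a : V) v
        = ∑ u : V, (1 - B) c u * ((1 - B)⁻¹ * Om) u v := by
      rw [Finset.sum_coe_sort A' (fun u => (1 - D) c u * ((1 - B)⁻¹ * Om) u v)]
      rw [Finset.sum_congr rfl (fun u _ => by rw [hDB c hcA u])]
      refine Finset.sum_subset (Finset.subset_univ _) fun u _ hu => ?_
      have hB0 : B c u = 0 := hBA' c hcA' u hu
      have hne : c ≠ u := fun h => hu (h ▸ hcA')
      simp [Matrix.sub_apply, Matrix.one_apply_ne hne, hB0]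
    rw [hstep]
    have : ∑ u : V, (1 - B) c u * ((1 - B)⁻¹ * Om) u v
        = ((1 - B) * ((1 - B)⁻¹ * Om)) c v := by
      rw [Matrix.mul_apply]
    rw [this, hZOm, ← hOm.apply, hOmv c (Finset.mem_of_mem_erase hc)]
  -- delta recovers B
  have hdelta : delta v (C.erase q) A' S D = fun c : ↥(C.erase q) => B v (c : V) := by
    set M := msub (1 - D) (C.erase q) A' * msub S A' (C.erase q) with hMdef
    have hMdet : IsUnit M.det := (Matrix.isUnit_iff_isUnit_det _).mp hinv'
    have hvec : msub (1 - D) (C.erase q) A' *ᵥ (fun a : ↥A' => S (a : V) v)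
        = M *ᵥ (fun c : ↥(C.erase q) => B v (c : V)) := by
      funext c
      have h0 : ∑ a : ↥A', (1 - D) (c : V) (a : V) *
          (S (a : V) v - ∑ c' : ↥(C.erase q), S (a : V) (c' : V) * B v (c' : V)) = 0 := by
        rw [Finset.sum_congr rfl (fun a _ => by rw [hstar (a : V) (hA'A a a.2)])]
        exact hkey2 c c.2
      simp only [mul_sub, Finset.sum_sub_distrib, sub_eq_zero] at h0
      show ∑ a : ↥A', (1 - D) (c : V) (a : V) * S (a : V) v = _
      rw [h0]
      simp only [Matrix.mulVec, Matrix.mul_apply, dotProduct, hMdef, msub,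
        Matrix.submatrix_apply, Finset.sum_mul, Finset.mul_sum, mul_assoc]
      exact Finset.sum_comm
    have : delta v (C.erase q) A' S D
        = (M⁻¹ * msub (1 - D) (C.erase q) A') *ᵥ (fun a : ↥A' => S (a : V) v) := rfl
    rw [this, ← Matrix.mulVec_mulVec, hvec, Matrix.mulVec_mulVec,
      Matrix.nonsing_inv_mul _ hMdet, Matrix.one_mulVec]
  -- residual identities
  have hsub1 : ∀ (x : V → ℝ) (u : V), x u - ∑ w : V, B u w * x w = ((1 - B) *ᵥ x) u := by
    intro x u
    simp [Matrix.mulVec, dotProduct, Matrix.sub_apply, sub_mul, Finset.sum_sub_distrib,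
      Matrix.one_apply]
  have hres : ∀ ω, Y ω v - ∑ c : ↥(C.erase q), delta v (C.erase q) A' S D c * Y ω (c : V)
      = ε ω v := by
    intro ω
    have h1 : ∑ c : ↥(C.erase q), delta v (C.erase q) A' S D c * Y ω (c : V)
        = ∑ u : V, B v u * Y ω u := by
      rw [hdelta, Finset.sum_coe_sort (C.erase q) (fun u => B v u * Y ω u)]
      exact Finset.sum_subset (Finset.subset_univ _) fun u _ hu => by
        rw [hBv u hu, zero_mul]
    rw [h1, hsub1 (Y ω) v, hY ω, Matrix.mulVec_mulVec, hZ1, Matrix.one_mulVec]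
  have hresq : ∀ ω, Y ω q - ∑ w : V, D q w * Y ω w = ε ω q := by
    intro ω
    have hqA := hCA q hq
    have h1 : ∑ w : V, D q w * Y ω w = ∑ w : V, B q w * Y ω w :=
      Finset.sum_congr rfl fun w _ => by rw [hDB' q hqA w]
    rw [h1, hsub1 (Y ω) q, hY ω, Matrix.mulVec_mulVec, hZ1, Matrix.one_mulVec]
  refine ⟨hdelta, hres, ?_⟩
  intro K hK _hmom
  constructor
  · exact integral_congr_ae (Filter.Eventually.of_forall fun ω => by dsimp only; rw [hresq ω, hres ω])
  · have hXY : IndepFun (fun ω => (ε ω q) ^ (K - 1)) (fun ω => ε ω v) volume := by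
      have hg : Measurable fun x : ↥C → ℝ => (x ⟨q, hq⟩) ^ (K - 1) :=
        (measurable_pi_apply (⟨q, hq⟩ : ↥C)).pow_const (K - 1)
      exact hindep.comp hg measurable_id
    have hXm : AEStronglyMeasurable (fun ω => (ε ω q) ^ (K - 1)) volume :=
      ((hint q).aemeasurable.pow_const (K - 1)).aestronglyMeasurable
    have h := hXY.integral_fun_mul_eq_mul_integral hXm (hint v).aestronglyMeasurable
    rw [hmean v, mul_zero] at h
    exact h
end

section
/- Let G = (V, E) be a finite directed acyclic graph, v ∈ V, C ⊆ V ∖ {v}, and q ∈ C with (q,v) ∈ E (q is a parent of v). For β ∈ ℝ^E define B(β) ∈ ℝ^{V×V} by B(β)_{wz} = β_{(z,w)} if (z,w) ∈ E and 0 otherwise, and let B̃(β)(C ∪ {v}) denote the corresponding marginal direct effects matrix. Then the set {β ∈ ℝ^E : B̃(β)(C ∪ {v})_{vq} = 0} has Lebesgue measure zero in ℝ^E. -/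
open Matrix MeasureTheory

theorem continuous_mveval {σ : Type*} (P : MvPolynomial σ ℝ) :
    Continuous fun x : σ → ℝ => MvPolynomial.eval x P := by
  induction P using MvPolynomial.induction_on with
  | C a => simpa using continuous_const
  | add p q hp hq => simp only [map_add]; exact hp.add hq
  | mul_X p i hp =>
      simp only [_root_.map_mul, MvPolynomial.eval_X]; exact hp.mul (continuous_apply i)

theorem fin_mv_null : ∀ (n : ℕ) (P : MvPolynomial (Fin n) ℝ), P ≠ 0 →
    volume {x : Fin n → ℝ | MvPolynomial.eval x P = 0} = 0 := by
  intro n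
  induction n with
  | zero =>
    intro P hP
    obtain ⟨c, rfl⟩ := MvPolynomial.C_surjective (Fin 0) P
    have hc : c ≠ 0 := fun h => hP (by simp [h])
    have h : {x : Fin 0 → ℝ | MvPolynomial.eval x (MvPolynomial.C c) = 0} = ∅ := by
      ext x; simp [hc]
    rw [h]; simp
  | succ n ih =>
    intro P hP
    set q : Polynomial (MvPolynomial (Fin n) ℝ) := MvPolynomial.finSuccEquiv ℝ n P with hq
    have hq0 : q ≠ 0 := by
      simp [hq, EmbeddingLike.map_eq_zero_iff, hP]
    have hlead : q.leadingCoeff ≠ 0 := Polynomial.leadingCoeff_ne_zero.2 hq0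
    -- the set in Fin (n+1) variables
    set S : Set (Fin (n + 1) → ℝ) := {x | MvPolynomial.eval x P = 0} with hS
    have hSm : MeasurableSet S :=
      (continuous_mveval P).measurable (measurableSet_singleton 0)
    -- transfer to product
    have hmp : MeasurePreserving
        (fun p : (Fin n → ℝ) × ℝ => Fin.cons p.2 p.1 : ((Fin n → ℝ) × ℝ) → (Fin (n+1) → ℝ))
        (volume.prod volume) volume := by
      have h1 := (MeasureTheory.volume_preserving_piFinSuccAbove (fun _ : Fin (n+1) => ℝ) 0).symm
      have h2 : MeasurePreserving (Prod.swap : (Fin n → ℝ) × ℝ → ℝ × (Fin n → ℝ))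
          (volume.prod volume) (volume.prod volume) := Measure.measurePreserving_swap
      have := h1.comp h2
      convert this using 1
      · rfl
      ext p
      simp [MeasurableEquiv.piFinSuccAbove, Fin.insertNth_zero']
    have key : volume ((fun p : (Fin n → ℝ) × ℝ => Fin.cons p.2 p.1) ⁻¹' S) = 0 := by
      rw [Measure.volume_eq_prod, Measure.measure_prod_null (hmp.measurable hSm)]
      have hbad := ih q.leadingCoeff hlead
      filter_upwards [compl_mem_ae_iff.2 hbad] with xs hxs
      have hmap : q.map (MvPolynomial.eval xs) ≠ 0 := by
        intro h
        apply hxs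
        show MvPolynomial.eval xs q.leadingCoeff = 0
        rw [Polynomial.leadingCoeff, ← Polynomial.coeff_map, h, Polynomial.coeff_zero]
      have : (Prod.mk xs ⁻¹' ((fun p : (Fin n → ℝ) × ℝ => Fin.cons p.2 p.1) ⁻¹' S)) =
          {y : ℝ | Polynomial.IsRoot (q.map (MvPolynomial.eval xs)) y} := by
        ext y
        simp only [Set.mem_preimage, Set.mem_setOf_eq, hS, Polynomial.IsRoot]
        rw [MvPolynomial.eval_eq_eval_mv_eval' xs y P]
      rw [this]
      exact Set.Finite.measure_zero (Polynomial.finite_setOf_isRoot hmap) volume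
    calc volume S = (volume.prod volume) ((fun p : (Fin n → ℝ) × ℝ => Fin.cons p.2 p.1) ⁻¹' S) :=
          (hmp.measure_preimage hSm.nullMeasurableSet).symm
      _ = 0 := key

theorem mv_null {σ : Type*} [Fintype σ] (P : MvPolynomial σ ℝ) (hP : P ≠ 0) :
    volume {x : σ → ℝ | MvPolynomial.eval x P = 0} = 0 := by
  classical
  let e := Fintype.equivFin σ
  have hren : MvPolynomial.rename e P ≠ 0 := by
    intro h
    exact hP ((MvPolynomial.rename_injective e e.injective).eq_iff.mp (by simpa using h))
  have h0 := fin_mv_null _ (MvPolynomial.rename e P) hren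
  have hmp := (MeasureTheory.volume_measurePreserving_piCongrLeft (fun _ : Fin (Fintype.card σ) => ℝ) e).symm
  have hSm : MeasurableSet {x : σ → ℝ | MvPolynomial.eval x P = 0} :=
    (continuous_mveval P).measurable (measurableSet_singleton 0)
  have := hmp.measure_preimage hSm.nullMeasurableSet
  rw [← this]
  have heq : ((MeasurableEquiv.piCongrLeft (fun _ => ℝ) e).symm ⁻¹' {x : σ → ℝ | MvPolynomial.eval x P = 0}) =
      {y : Fin (Fintype.card σ) → ℝ | MvPolynomial.eval y (MvPolynomial.rename e P) = 0} := by
    ext y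
    simp only [Set.mem_preimage, Set.mem_setOf_eq, MvPolynomial.eval_rename]
    have : ((MeasurableEquiv.piCongrLeft (fun _ => ℝ) e).symm y) = y ∘ e := by
      ext a
      simp [MeasurableEquiv.piCongrLeft, Equiv.piCongrLeft, Equiv.piCongrLeft']
    rw [this]
  rw [heq, h0]


/-- A function of finitely many real variables is polynomial. -/
def IsPolyFun {σ : Type*} (f : (σ → ℝ) → ℝ) : Prop :=
  ∃ P : MvPolynomial σ ℝ, ∀ x, MvPolynomial.eval x P = f x

namespace IsPolyFun

variable {σ : Type*}

theorem const (c : ℝ) : IsPolyFun (fun _ : σ → ℝ => c) := ⟨MvPolynomial.C c, by simp⟩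

theorem coord (i : σ) : IsPolyFun (fun x : σ → ℝ => x i) := ⟨MvPolynomial.X i, by simp⟩

theorem add {f g : (σ → ℝ) → ℝ} (hf : IsPolyFun f) (hg : IsPolyFun g) :
    IsPolyFun (fun x => f x + g x) := by
  obtain ⟨P, hP⟩ := hf; obtain ⟨Q, hQ⟩ := hg
  exact ⟨P + Q, fun x => by simp [hP, hQ]⟩

theorem mul {f g : (σ → ℝ) → ℝ} (hf : IsPolyFun f) (hg : IsPolyFun g) :
    IsPolyFun (fun x => f x * g x) := by
  obtain ⟨P, hP⟩ := hf; obtain ⟨Q, hQ⟩ := hg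
  exact ⟨P * Q, fun x => by simp [hP, hQ]⟩

theorem neg {f : (σ → ℝ) → ℝ} (hf : IsPolyFun f) : IsPolyFun (fun x => -f x) := by
  obtain ⟨P, hP⟩ := hf; exact ⟨-P, fun x => by simp [hP]⟩

theorem sub {f g : (σ → ℝ) → ℝ} (hf : IsPolyFun f) (hg : IsPolyFun g) :
    IsPolyFun (fun x => f x - g x) := by
  obtain ⟨P, hP⟩ := hf; obtain ⟨Q, hQ⟩ := hg
  exact ⟨P - Q, fun x => by simp [hP, hQ]⟩

theorem sum {ι : Type*} (s : Finset ι) (f : ι → (σ → ℝ) → ℝ)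
    (h : ∀ i ∈ s, IsPolyFun (f i)) : IsPolyFun (fun x => ∑ i ∈ s, f i x) := by
  classical
  induction s using Finset.induction_on with
  | empty => simpa using const 0
  | insert _ _ hni ih =>
    rename_i a s
    simp only [Finset.sum_insert hni]
    exact (h a (Finset.mem_insert_self a s)).add
      (ih fun i hi => h i (Finset.mem_insert_of_mem hi))

theorem prod {ι : Type*} (s : Finset ι) (f : ι → (σ → ℝ) → ℝ)
    (h : ∀ i ∈ s, IsPolyFun (f i)) : IsPolyFun (fun x => ∏ i ∈ s, f i x) := by
  classical
  induction s using Finset.induction_on with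
  | empty => simpa using const 1
  | insert _ _ hni ih =>
    rename_i a s
    simp only [Finset.prod_insert hni]
    exact (h a (Finset.mem_insert_self a s)).mul
      (ih fun i hi => h i (Finset.mem_insert_of_mem hi))

theorem zsmul {f : (σ → ℝ) → ℝ} (hf : IsPolyFun f) (z : ℤ) :
    IsPolyFun (fun x => z • f x) := by
  have := (const (σ := σ) (z : ℝ)).mul hf
  simpa [zsmul_eq_mul] using this

/-- The determinant of a matrix of polynomial functions is a polynomial function. -/
theorem det {m : Type*} [Fintype m] [DecidableEq m] (M : (σ → ℝ) → Matrix m m ℝ)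
    (h : ∀ i j, IsPolyFun (fun x => M x i j)) :
    IsPolyFun (fun x => (M x).det) := by
  have : ∀ x, (M x).det = ∑ p : Equiv.Perm m, Equiv.Perm.sign p •
      ∏ i, M x (p i) i := fun x => Matrix.det_apply (M x)
  simp only [this]
  exact sum Finset.univ _ fun p _ => (prod Finset.univ _ fun i _ => h _ _).zsmul _

end IsPolyFun


section Tri
variable {ι : Type*} [Fintype ι] [DecidableEq ι]

theorem tri_pow (M : Matrix ι ι ℝ) (b : ι → ℕ) (h : ∀ i j, M i j ≠ 0 → b j < b i) :
    ∀ (k : ℕ) (i j : ι), (M ^ k) i j ≠ 0 → b j + k ≤ b i := by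
  intro k
  induction k with
  | zero =>
    intro i j hne
    have : i = j := by
      by_contra hij
      exact hne (by simp [Matrix.one_apply_ne hij])
    simp [this]
  | succ k ih =>
    intro i j hne
    rw [pow_succ, Matrix.mul_apply] at hne
    obtain ⟨u, _, hu⟩ := Finset.exists_ne_zero_of_sum_ne_zero hne
    have h1 : (M ^ k) i u ≠ 0 := fun h0 => hu (by simp [h0])
    have h2 : M u j ≠ 0 := fun h0 => hu (by simp [h0])
    have := ih i u h1
    have := h u j h2
    omega

theorem tri_nilpotent (M : Matrix ι ι ℝ) (b : ι → ℕ) (m : ℕ)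
    (h : ∀ i j, M i j ≠ 0 → b j < b i) (hb : ∀ i, b i < m) : M ^ m = 0 := by
  ext i j
  by_contra hne
  have := tri_pow M b h m i j hne
  have := hb i
  omega

theorem tri_geom (M : Matrix ι ι ℝ) (m : ℕ) (hM : M ^ m = 0) :
    (1 - M) * ∑ k ∈ Finset.range m, M ^ k = 1 := by
  have := mul_geom_sum M m
  have h2 : (1 - M) * ∑ k ∈ Finset.range m, M ^ k
      = -((M - 1) * ∑ k ∈ Finset.range m, M ^ k) := by
    rw [← neg_sub M 1, neg_mul]
  rw [h2, this, hM]
  simp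

end Tri

section Height
variable {V : Type*} [Fintype V] [DecidableEq V] (E : Finset (V × V))

open scoped Classical in
/-- Height function for an acyclic relation. -/
noncomputable def ht (u : V) : ℕ :=
  (Finset.univ.filter (fun w => Relation.TransGen (fun a b => (a, b) ∈ E) w u)).card

open scoped Classical in
theorem ht_lt (hacyc : ∀ v : V, ¬ Relation.TransGen (fun a b => (a, b) ∈ E) v v)
    {z w : V} (hzw : (z, w) ∈ E) : ht E z < ht E w := by
  classical
  apply Finset.card_lt_card
  constructor
  · intro u hu
    simp only [Finset.mem_filter, Finset.mem_univ, true_and] at hu ⊢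
    exact hu.tail hzw
  · intro hsub
    have hz : z ∈ Finset.univ.filter
        (fun u => Relation.TransGen (fun a b => (a, b) ∈ E) u w) :=
      Finset.mem_filter.2 ⟨Finset.mem_univ z,
        Relation.TransGen.single (r := fun a b => (a, b) ∈ E) hzw⟩
    have := hsub hz
    simp only [Finset.mem_filter, Finset.mem_univ, true_and] at this
    exact hacyc z this

open scoped Classical in
theorem ht_lt_card (hacyc : ∀ v : V, ¬ Relation.TransGen (fun a b => (a, b) ∈ E) v v)
    (u : V) : ht E u < Fintype.card V := by
  classical
  have : (Finset.univ.filter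
      (fun w => Relation.TransGen (fun a b => (a, b) ∈ E) w u)) ⊂ Finset.univ := by
    rw [Finset.ssubset_univ_iff]
    intro h
    have : u ∈ Finset.univ.filter
        (fun w => Relation.TransGen (fun a b => (a, b) ∈ E) w u) := by
      rw [h]; exact Finset.mem_univ u
    simp only [Finset.mem_filter, Finset.mem_univ, true_and] at this
    exact hacyc u this
  have := Finset.card_lt_card this
  rwa [Finset.card_univ] at this

end Height

/-- For a finite DAG `(V, E)`, `v ∉ C`, and a parent `q ∈ C` of `v`
(`(q,v) ∈ E`), the set of edge-weight vectors `β ∈ ℝ^E` for which the marginal direct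
effect `B̃(β)(C ∪ {v})_{vq}` vanishes has Lebesgue measure zero. -/
theorem stmt_14 {V : Type*} [Fintype V] [DecidableEq V]
    (E : Finset (V × V))
    (hacyc : ∀ v : V, ¬ Relation.TransGen (fun a b => (a, b) ∈ E) v v)
    (v : V) (C : Finset V) (hvC : v ∉ C)
    (q : V) (hq : q ∈ C) (hqv : (q, v) ∈ E) :
    volume {β : ↥E → ℝ |
      Btilde (edgeMatrix E β) (insert v C)
        ⟨v, Finset.mem_insert_self v C⟩ ⟨q, Finset.mem_insert_of_mem hq⟩ = 0} = 0 := by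
  set n := Fintype.card V with hn
  set A := insert v C with hA
  set v' : ↥A := ⟨v, Finset.mem_insert_self v C⟩
  set q' : ↥A := ⟨q, Finset.mem_insert_of_mem hq⟩
  have hvq : v ≠ q := fun h => hvC (h ▸ hq)
  have hv'q' : v' ≠ q' := fun h => hvq (congrArg Subtype.val h)
  -- basic triangularity of the edge matrix
  have hedge : ∀ (β : ↥E → ℝ) (w z : V), edgeMatrix E β w z ≠ 0 → ht E z < ht E w := by
    intro β w z hne
    by_cases h : (z, w) ∈ E
    · exact ht_lt E hacyc h
    · exact absurd (by simp [edgeMatrix, h]) hne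
  -- the inverse of (1 - B) is the geometric sum
  set G : (↥E → ℝ) → Matrix V V ℝ :=
    fun β => ∑ k ∈ Finset.range n, (edgeMatrix E β) ^ k with hG
  have hnil : ∀ β : ↥E → ℝ, (edgeMatrix E β) ^ n = 0 := fun β =>
    tri_nilpotent _ (ht E) n (hedge β) (ht_lt_card E hacyc)
  have hinv : ∀ β : ↥E → ℝ, (1 - edgeMatrix E β)⁻¹ = G β := fun β =>
    Matrix.inv_eq_right_inv (tri_geom _ n (hnil β))
  set Sm : (↥E → ℝ) → Matrix ↥A ↥A ℝ := fun β => msub (G β) A A with hSm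
  -- triangularity of Sm - 1
  have hSN : ∀ (β : ↥E → ℝ) (i j : ↥A), (Sm β - 1) i j ≠ 0 → ht E (j : V) < ht E (i : V) := by
    intro β i j hne
    have hSij : (Sm β - 1) i j = G β (i : V) (j : V) - (1 : Matrix ↥A ↥A ℝ) i j := rfl
    by_cases hij : i = j
    · exfalso
      apply hne
      rw [hSij, hij, Matrix.one_apply_eq, hG]
      simp only [Matrix.sum_apply]
      rw [Finset.sum_eq_single 0]
      · simp
      · intro k _ hk
        by_contra hKne
        have := tri_pow (edgeMatrix E β) (ht E) (hedge β) k (j : V) (j : V) hKne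
        omega
      · intro h
        exfalso
        have : 0 < n := Fintype.card_pos_iff.2 ⟨v⟩
        simp [this] at h
    · have hcoe : (i : V) ≠ (j : V) := fun h => hij (Subtype.ext h)
      rw [hSij, Matrix.one_apply_ne hij, sub_zero, hG] at hne
      simp only [Matrix.sum_apply] at hne
      obtain ⟨k, _, hk⟩ := Finset.exists_ne_zero_of_sum_ne_zero hne
      have := tri_pow (edgeMatrix E β) (ht E) (hedge β) k (i : V) (j : V) hk
      rcases Nat.eq_zero_or_pos k with rfl | hkpos
      · exact absurd (Matrix.one_apply_ne hcoe) hk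
      · omega
  -- Sm is invertible with explicit right inverse
  have hSright : ∀ β : ↥E → ℝ, Sm β * ∑ k ∈ Finset.range n, (-(Sm β - 1)) ^ k = 1 := by
    intro β
    have hnilN : (-(Sm β - 1)) ^ n = 0 := by
      refine tri_nilpotent (ι := ↥A) (-(Sm β - 1)) (fun i => ht E (i : V)) n ?_
        (fun i => ht_lt_card E hacyc (i : V))
      intro i j hne
      exact hSN β i j (fun h => hne (by simp [h]))
    have := tri_geom (-(Sm β - 1)) n hnilN
    have hrw : (1 : Matrix ↥A ↥A ℝ) - -(Sm β - 1) = Sm β := by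
      rw [sub_neg_eq_add]
      abel
    rwa [hrw] at this
  have hdet : ∀ β : ↥E → ℝ, (Sm β).det ≠ 0 := fun β =>
    Matrix.det_ne_zero_of_right_inverse (hSright β)
  -- the Btilde entry vanishes iff an adjugate entry vanishes
  have hBt : ∀ β : ↥E → ℝ,
      (Btilde (edgeMatrix E β) A v' q' = 0 ↔ (Sm β).adjugate v' q' = 0) := by
    intro β
    have h1 : Btilde (edgeMatrix E β) A v' q' = -((Sm β)⁻¹ v' q') := by
      rw [Btilde, hinv β]
      show (1 : Matrix ↥A ↥A ℝ) v' q' - (Sm β)⁻¹ v' q' = _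
      rw [Matrix.one_apply_ne hv'q', zero_sub]
    have h2 : (Sm β)⁻¹ v' q' = ((Sm β).det)⁻¹ * (Sm β).adjugate v' q' := by
      rw [Matrix.inv_def, Ring.inverse_eq_inv]
      simp [Matrix.smul_apply]
    rw [h1, h2, neg_eq_zero]
    constructor
    · intro h
      rcases mul_eq_zero.1 h with h' | h'
      · exact absurd h' (inv_ne_zero (hdet β))
      · exact h'
    · intro h; rw [h, mul_zero]
  -- the adjugate entry is a polynomial function of β
  have hpoly : IsPolyFun (fun β : ↥E → ℝ => (Sm β).adjugate v' q') := by
    have hent : ∀ w z : V, IsPolyFun (fun β : ↥E → ℝ => edgeMatrix E β w z) := by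
      intro w z
      by_cases h : (z, w) ∈ E
      · have : (fun β : ↥E → ℝ => edgeMatrix E β w z) = fun β => β ⟨(z, w), h⟩ := by
          funext β; simp [edgeMatrix, h]
        rw [this]; exact IsPolyFun.coord _
      · have : (fun β : ↥E → ℝ => edgeMatrix E β w z) = fun _ => (0 : ℝ) := by
          funext β; simp [edgeMatrix, h]
        rw [this]; exact IsPolyFun.const 0
    have hpow : ∀ (k : ℕ) (w z : V), IsPolyFun (fun β : ↥E → ℝ => ((edgeMatrix E β) ^ k) w z) := by
      intro k
      induction k with
      | zero =>
        intro w z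
        simpa using IsPolyFun.const ((1 : Matrix V V ℝ) w z)
      | succ k ih =>
        intro w z
        simp only [pow_succ, Matrix.mul_apply]
        exact IsPolyFun.sum Finset.univ _ fun u _ => (ih w u).mul (hent u z)
    have hGp : ∀ w z : V, IsPolyFun (fun β : ↥E → ℝ => G β w z) := by
      intro w z
      simp only [hG, Matrix.sum_apply]
      exact IsPolyFun.sum _ _ fun k _ => hpow k w z
    have hSp : ∀ i j : ↥A, IsPolyFun (fun β : ↥E → ℝ => Sm β i j) := fun i j => hGp _ _
    have : ∀ β : ↥E → ℝ, (Sm β).adjugate v' q' =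
        ((Sm β).updateRow q' (Pi.single v' 1)).det := fun β => Matrix.adjugate_apply _ _ _
    simp only [this]
    refine IsPolyFun.det _ fun i j => ?_
    by_cases hiq : i = q'
    · have : ∀ β : ↥E → ℝ, ((Sm β).updateRow q' (Pi.single v' 1)) i j = (Pi.single v' 1 : ↥A → ℝ) j := by
        intro β; rw [hiq, Matrix.updateRow_self]
      simp only [this]; exact IsPolyFun.const _
    · have : ∀ β : ↥E → ℝ, ((Sm β).updateRow q' (Pi.single v' 1)) i j = Sm β i j := by
        intro β; rw [Matrix.updateRow_ne hiq]
      simp only [this]; exact hSp i j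
  obtain ⟨P, hP⟩ := hpoly
  -- nonvanishing at a witness point
  have hwit : ∃ β : ↥E → ℝ, (Sm β).adjugate v' q' ≠ 0 := by
    refine ⟨fun e => if (e : V × V) = (q, v) then 1 else 0, ?_⟩
    set β₀ : ↥E → ℝ := fun e => if (e : V × V) = (q, v) then 1 else 0 with hβ₀
    have hB0 : edgeMatrix E β₀ = Matrix.single v q 1 := by
      ext w z
      by_cases h : (z, w) ∈ E
      · simp only [edgeMatrix, dif_pos h, hβ₀, Matrix.single, Matrix.of_apply]
        by_cases h2 : (z, w) = (q, v)
        · rcases Prod.mk.injEq .. ▸ h2 with ⟨rfl, rfl⟩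
          simp
        · rw [if_neg h2, if_neg]
          intro hc
          exact h2 (by rw [Prod.ext_iff]; exact ⟨hc.2.symm, hc.1.symm⟩)
      · simp only [edgeMatrix, dif_neg h, Matrix.single, Matrix.of_apply]
        rw [eq_comm, ite_eq_right_iff]
        rintro ⟨rfl, rfl⟩
        exact absurd hqv h
    have hB0sq : Matrix.single v q (1 : ℝ) * Matrix.single v q 1 = 0 :=
      Matrix.single_mul_single_of_ne (c := (1 : ℝ)) v q v
        (fun h => hvq h.symm) 1
    have hinv0 : (1 - edgeMatrix E β₀)⁻¹ = 1 + edgeMatrix E β₀ := by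
      refine Matrix.inv_eq_right_inv ?_
      rw [hB0, sub_mul, mul_add, mul_add, one_mul, one_mul, mul_one, hB0sq]
      abel
    have hSm0 : Sm β₀ = 1 + Matrix.single v' q' (1 : ℝ) := by
      have : Sm β₀ = msub (1 + edgeMatrix E β₀) A A := by
        rw [show Sm β₀ = msub (G β₀) A A from rfl, ← hinv β₀, hinv0]
      rw [this, hB0]
      ext i j
      show ((1 + Matrix.single v q 1 : Matrix V V ℝ)) (i : V) (j : V) = _
      simp only [Matrix.add_apply, Matrix.single, Matrix.of_apply]
      congr 1
      · by_cases hij : i = j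
        · rw [hij, Matrix.one_apply_eq, Matrix.one_apply_eq]
        · rw [Matrix.one_apply_ne (fun h => hij (Subtype.ext h)), Matrix.one_apply_ne hij]
      · by_cases h1 : v = (i : V) ∧ q = (j : V)
        · have : v' = i ∧ q' = j := ⟨Subtype.ext h1.1, Subtype.ext h1.2⟩
          rw [if_pos h1, if_pos this]
        · rw [if_neg h1, if_neg]
          intro hc
          exact h1 ⟨congrArg Subtype.val hc.1, congrArg Subtype.val hc.2⟩
    have hE0sq : Matrix.single v' q' (1 : ℝ) * Matrix.single v' q' 1 = 0 :=
      Matrix.single_mul_single_of_ne (c := (1 : ℝ)) v' q' v'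
        (fun h => hv'q' h.symm) 1
    have hS0inv : (Sm β₀)⁻¹ = 1 - Matrix.single v' q' (1 : ℝ) := by
      refine Matrix.inv_eq_right_inv ?_
      rw [hSm0, add_mul, mul_sub, mul_sub, one_mul, one_mul, mul_one, hE0sq]
      abel
    have hentry : (Sm β₀)⁻¹ v' q' = -1 := by
      rw [hS0inv]
      show (1 : Matrix ↥A ↥A ℝ) v' q' - Matrix.single v' q' 1 v' q' = -1
      rw [Matrix.one_apply_ne hv'q', Matrix.single_apply_same]
      ring
    intro hadj
    have h2 : (Sm β₀)⁻¹ v' q' = ((Sm β₀).det)⁻¹ * (Sm β₀).adjugate v' q' := by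
      rw [Matrix.inv_def, Ring.inverse_eq_inv]
      simp [Matrix.smul_apply]
    rw [hentry, hadj, mul_zero] at h2
    norm_num at h2
  obtain ⟨β₀, hβ₀ne⟩ := hwit
  have hPne : P ≠ 0 := by
    intro h
    exact hβ₀ne (by simpa [h] using (hP β₀).symm)
  have hset : {β : ↥E → ℝ | Btilde (edgeMatrix E β) A v' q' = 0} =
      {β : ↥E → ℝ | MvPolynomial.eval β P = 0} := by
    ext β
    simp only [Set.mem_setOf_eq, hP β]
    exact hBt β
  show volume {β : ↥E → ℝ | Btilde (edgeMatrix E β) A v' q' = 0} = 0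
  rw [hset]
  exact mv_null P hPne
end

section
/- Let V be a finite set, E ⊆ V × V an acyclic relation, and B ∈ ℝ^{V×V} supported on E; write Π = (I − B)^{-1}. Let C ⊆ V and let v, q be distinct elements of V ∖ C. Then Π_{vq} − Σ_{c∈C} B̃(C ∪ {v})_{vc} Π_{cq} = B̃(C ∪ {q, v})_{vq}. -/
open Matrix Finset

section Tri
variable {ι : Type*} [Fintype ι] [DecidableEq ι]

lemma tri_det_one (b : ι → ℕ) (hb : Function.Injective b) (M : Matrix ι ι ℝ)
    (htri : M.BlockTriangular b) (hdiag : ∀ i, M i i = 1) : M.det = 1 := by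
  letI : LinearOrder ι := LinearOrder.lift' b hb
  have htri' : M.BlockTriangular id := fun i j h => htri h
  rw [Matrix.det_of_upperTriangular htri']
  simp [hdiag]

lemma tri_inv_tri (b : ι → ℕ) (hb : Function.Injective b) (M : Matrix ι ι ℝ)
    (htri : M.BlockTriangular b) (hdiag : ∀ i, M i i = 1) : M⁻¹.BlockTriangular b := by
  have hdet : IsUnit M.det := by rw [tri_det_one b hb M htri hdiag]; exact isUnit_one
  letI := M.invertibleOfIsUnitDet hdet
  exact blockTriangular_inv_of_blockTriangular htri

lemma tri_inv_diag (b : ι → ℕ) (hb : Function.Injective b) (M : Matrix ι ι ℝ)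
    (htri : M.BlockTriangular b) (hdiag : ∀ i, M i i = 1) : ∀ i, M⁻¹ i i = 1 := by
  intro i
  have hdet : IsUnit M.det := by rw [tri_det_one b hb M htri hdiag]; exact isUnit_one
  have h1 : (M * M⁻¹) i i = 1 := by rw [Matrix.mul_nonsing_inv M hdet]; simp
  rw [Matrix.mul_apply] at h1
  have hinv := tri_inv_tri b hb M htri hdiag
  rw [Finset.sum_eq_single i (fun k _ hk => ?_) (by simp)] at h1
  · rw [hdiag i, one_mul] at h1; exact h1
  · rcases lt_or_gt_of_ne (fun h : b k = b i => hk (hb h)) with h | h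
    · rw [htri h, zero_mul]
    · rw [hinv h, mul_zero]

end Tri

/-- For `B` supported on an acyclic relation, `Π = (I − B)⁻¹`, `C ⊆ V`,
and distinct `v, q ∈ V ∖ C`:
`Π_{vq} − Σ_{c∈C} B̃(C ∪ {v})_{vc} Π_{cq} = B̃(C ∪ {q, v})_{vq}`. -/
theorem stmt_15 {V : Type*} [Fintype V] [DecidableEq V]
    (r : V → V → Prop) (hacyc : ∀ v : V, ¬ Relation.TransGen r v v)
    (B : Matrix V V ℝ) (hsupp : ∀ u v : V, B v u ≠ 0 → r u v)
    (C : Finset V) (v q : V) (hv : v ∉ C) (hq : q ∉ C) (hvq : v ≠ q) :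
    (1 - B)⁻¹ v q -
        ∑ c : ↥C,
          Btilde B (insert v C) ⟨v, Finset.mem_insert_self v C⟩
              ⟨(c : V), Finset.mem_insert_of_mem c.2⟩ *
            (1 - B)⁻¹ (c : V) q =
      Btilde B (insert v (insert q C))
        ⟨v, Finset.mem_insert_self v (insert q C)⟩
        ⟨q, Finset.mem_insert_of_mem (Finset.mem_insert_self q C)⟩ := by
  classical
  -- topological order function
  set n := Fintype.card V with hn
  have hnpos : 0 < n := Fintype.card_pos_iff.mpr ⟨v⟩
  set e := Fintype.equivFin V with he
  set desc : V → Finset V := fun x => univ.filter (fun u => Relation.TransGen r x u) with hdesc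
  set b : V → ℕ := fun x => (desc x).card * n + (e x : ℕ) with hbdef
  have hdescmono : ∀ i j, r j i → (desc i).card < (desc j).card := by
    intro i j hji
    apply Finset.card_lt_card
    constructor
    · intro u hu
      simp only [hdesc, Finset.mem_filter, Finset.mem_univ, true_and] at hu ⊢
      exact Relation.TransGen.head hji hu
    · intro hsub
      have hi : i ∈ desc j := by
        simp only [hdesc, Finset.mem_filter, Finset.mem_univ, true_and]
        exact Relation.TransGen.single hji
      have := hsub hi
      simp only [hdesc, Finset.mem_filter, Finset.mem_univ, true_and] at this
      exact hacyc i this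
  have hblt : ∀ i j, B i j ≠ 0 → b i < b j := by
    intro i j hB
    have h1 := hdescmono i j (hsupp j i hB)
    have h2 : (e i : ℕ) < n := (e i).2
    calc b i < (desc i).card * n + n := by
          simp only [hbdef]; exact Nat.add_lt_add_left h2 _
      _ = ((desc i).card + 1) * n := by ring
      _ ≤ (desc j).card * n := Nat.mul_le_mul_right n h1
      _ ≤ b j := Nat.le_add_right _ _
  have hb : Function.Injective b := by
    intro x y hxy
    simp only [hbdef] at hxy
    have hx : (e x : ℕ) < n := (e x).2
    have hy : (e y : ℕ) < n := (e y).2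
    have hcard : (desc x).card = (desc y).card := by
      rcases Nat.lt_trichotomy (desc x).card (desc y).card with h | h | h
      · nlinarith
      · exact h
      · nlinarith
    rw [hcard] at hxy
    have : (e x : ℕ) = (e y : ℕ) := Nat.add_left_cancel hxy
    have : e x = e y := Fin.ext this
    exact e.injective this
  -- triangularity of 1 - B
  have htriIB : (1 - B).BlockTriangular b := by
    intro i j hij
    have hne : i ≠ j := by intro h; subst h; exact lt_irrefl _ hij
    have hB0 : B i j = 0 := by
      by_contra hB
      exact absurd (hblt i j hB) (not_lt.mpr (le_of_lt hij))
    simp [Matrix.sub_apply, Matrix.one_apply_ne hne, hB0]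
  have hdiagIB : ∀ i, (1 - B) i i = 1 := by
    intro i
    have hB0 : B i i = 0 := by
      by_contra hB
      exact lt_irrefl _ (hblt i i hB)
    simp [Matrix.sub_apply, hB0]
  set Pm := (1 - B)⁻¹ with hPm
  have htriP : Pm.BlockTriangular b := tri_inv_tri b hb _ htriIB hdiagIB
  have hdiagP : ∀ i, Pm i i = 1 := tri_inv_diag b hb _ htriIB hdiagIB
  -- submatrix facts
  have hsub_tri : ∀ S : Finset V, (msub Pm S S).BlockTriangular (fun x : ↥S => b ↑x) :=
    fun S => htriP.submatrix
  have hsub_inj : ∀ S : Finset V, Function.Injective (fun x : ↥S => b ↑x) :=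
    fun S => hb.comp Subtype.val_injective
  have hsub_diag : ∀ (S : Finset V) (x : ↥S), msub Pm S S x x = 1 := fun S x => hdiagP ↑x
  have hsub_inv_tri : ∀ S : Finset V, (msub Pm S S)⁻¹.BlockTriangular (fun x : ↥S => b ↑x) :=
    fun S => tri_inv_tri _ (hsub_inj S) _ (hsub_tri S) (hsub_diag S)
  have hsub_inv_diag : ∀ (S : Finset V) (x : ↥S), (msub Pm S S)⁻¹ x x = 1 :=
    fun S => tri_inv_diag _ (hsub_inj S) _ (hsub_tri S) (hsub_diag S)
  have hsub_det : ∀ S : Finset V, IsUnit (msub Pm S S).det := by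
    intro S
    rw [tri_det_one _ (hsub_inj S) _ (hsub_tri S) (hsub_diag S)]
    exact isUnit_one
  set A := insert v C with hA
  set D := insert v (insert q C) with hD
  have hvA : v ∈ A := Finset.mem_insert_self v C
  have hqD : q ∈ D := Finset.mem_insert_of_mem (Finset.mem_insert_self q C)
  have hvD : v ∈ D := Finset.mem_insert_self v _
  have hqA : q ∉ A := by
    simp only [hA, Finset.mem_insert]
    push_neg
    exact ⟨fun h => hvq h.symm, hq⟩
  have hDA : D = insert q A := by rw [hA, hD, Finset.insert_comm]
  have hAD : ∀ a ∈ A, a ∈ D := by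
    intro a ha
    rw [hDA]
    exact Finset.mem_insert_of_mem ha
  set PInv : V → V → ℝ := fun i j =>
    if h : i ∈ A ∧ j ∈ A then (msub Pm A A)⁻¹ ⟨i, h.1⟩ ⟨j, h.2⟩ else 0 with hPInvDef
  set NInv : V → V → ℝ := fun i j =>
    if h : i ∈ D ∧ j ∈ D then (msub Pm D D)⁻¹ ⟨i, h.1⟩ ⟨j, h.2⟩ else 0 with hNInvDef
  have hPInv_eq : ∀ (x y : ↥A), (msub Pm A A)⁻¹ x y = PInv ↑x ↑y := by
    intro x y
    simp only [hPInvDef]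
    rw [dif_pos ⟨x.2, y.2⟩, Subtype.coe_eta, Subtype.coe_eta]
  have hNInv_eq : ∀ (x y : ↥D), (msub Pm D D)⁻¹ x y = NInv ↑x ↑y := by
    intro x y
    simp only [hNInvDef]
    rw [dif_pos ⟨x.2, y.2⟩, Subtype.coe_eta, Subtype.coe_eta]
  -- matrix identities as sums over Finsets
  have hE2 : ∀ i j, ∀ hi : i ∈ A, ∀ hj : j ∈ A,
      ∑ a ∈ A, Pm i a * PInv a j = if i = j then 1 else 0 := by
    intro i j hi hj
    have h0 : (msub Pm A A * (msub Pm A A)⁻¹) ⟨i, hi⟩ ⟨j, hj⟩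
        = (1 : Matrix ↥A ↥A ℝ) ⟨i, hi⟩ ⟨j, hj⟩ := by
      rw [Matrix.mul_nonsing_inv _ (hsub_det A)]
    rw [Matrix.mul_apply] at h0
    calc ∑ a ∈ A, Pm i a * PInv a j = ∑ x : ↥A, Pm i ↑x * PInv ↑x j :=
          (Finset.sum_coe_sort A (fun a => Pm i a * PInv a j)).symm
      _ = ∑ x : ↥A, msub Pm A A ⟨i, hi⟩ x * (msub Pm A A)⁻¹ x ⟨j, hj⟩ := by
          refine Finset.sum_congr rfl fun x _ => ?_
          rw [hPInv_eq x ⟨j, hj⟩]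
          rfl
      _ = (1 : Matrix ↥A ↥A ℝ) ⟨i, hi⟩ ⟨j, hj⟩ := h0
      _ = if i = j then 1 else 0 := by
          rw [Matrix.one_apply]
          simp [Subtype.mk_eq_mk]
  have hE3 : ∀ j, ∀ hj : j ∈ D,
      ∑ d ∈ D, NInv v d * Pm d j = if v = j then 1 else 0 := by
    intro j hj
    have h0 : ((msub Pm D D)⁻¹ * msub Pm D D) ⟨v, hvD⟩ ⟨j, hj⟩
        = (1 : Matrix ↥D ↥D ℝ) ⟨v, hvD⟩ ⟨j, hj⟩ := by
      rw [Matrix.nonsing_inv_mul _ (hsub_det D)]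
    rw [Matrix.mul_apply] at h0
    calc ∑ d ∈ D, NInv v d * Pm d j = ∑ x : ↥D, NInv v ↑x * Pm ↑x j :=
          (Finset.sum_coe_sort D (fun d => NInv v d * Pm d j)).symm
      _ = ∑ x : ↥D, (msub Pm D D)⁻¹ ⟨v, hvD⟩ x * msub Pm D D x ⟨j, hj⟩ := by
          refine Finset.sum_congr rfl fun x _ => ?_
          rw [hNInv_eq ⟨v, hvD⟩ x]
          rfl
      _ = (1 : Matrix ↥D ↥D ℝ) ⟨v, hvD⟩ ⟨j, hj⟩ := h0
      _ = if v = j then 1 else 0 := by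
          rw [Matrix.one_apply]
          simp [Subtype.mk_eq_mk]
  -- triangularity in elementwise form
  have hTPm : ∀ i j, Pm i j ≠ 0 → b i ≤ b j :=
    fun i j h => le_of_not_gt (fun hlt => h (htriP hlt))
  have hTPinv : ∀ i j, PInv i j ≠ 0 → b i ≤ b j := by
    intro i j h
    simp only [hPInvDef] at h
    by_cases hm : i ∈ A ∧ j ∈ A
    · rw [dif_pos hm] at h
      exact le_of_not_gt (fun hlt => h (hsub_inv_tri A (i := ⟨i, hm.1⟩) (j := ⟨j, hm.2⟩) hlt))
    · rw [dif_neg hm] at h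
      exact absurd rfl h
  have hPInv_vv : PInv v v = 1 := by
    simp only [hPInvDef]
    rw [dif_pos ⟨hvA, hvA⟩]
    exact hsub_inv_diag A ⟨v, hvA⟩
  -- K1
  set H : V → ℝ := fun a' => ∑ c ∈ A, PInv a' c * Pm c q with hHdef
  have hK1 : ∀ i ∈ A, ∑ a' ∈ A, Pm i a' * H a' = Pm i q := by
    intro i hi
    have step1 : ∀ a' ∈ A, Pm i a' * H a'
        = ∑ a ∈ A, Pm i a' * PInv a' a * Pm a q := by
      intro a' _
      rw [hHdef, Finset.mul_sum]
      exact Finset.sum_congr rfl fun a _ => by ring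
    rw [Finset.sum_congr rfl step1, Finset.sum_comm]
    have step2 : ∀ a ∈ A, ∑ a' ∈ A, Pm i a' * PInv a' a * Pm a q
        = (if i = a then 1 else 0) * Pm a q := by
      intro a ha
      rw [← Finset.sum_mul, hE2 i a hi ha]
    rw [Finset.sum_congr rfl step2]
    simp [Finset.sum_ite_eq, hi]
  -- K2
  have hK2 : ∑ a' ∈ A, Pm q a' * H a' = 0 := by
    apply Finset.sum_eq_zero
    intro a' ha'
    rw [hHdef, Finset.mul_sum]
    apply Finset.sum_eq_zero
    intro a _
    by_cases h1 : Pm q a' = 0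
    · simp [h1]
    by_cases h2 : PInv a' a = 0
    · simp [h2]
    by_cases h3 : Pm a q = 0
    · simp [h3]
    exfalso
    have hb1 := hTPm _ _ h1
    have hb2 := hTPinv _ _ h2
    have hb3 := hTPm _ _ h3
    have : b q = b a' := le_antisymm hb1 (le_trans hb2 hb3)
    exact hqA (hb this ▸ ha')
  -- K3
  have hK3 : ∀ j, j ∈ D → ∑ a ∈ A, NInv v a * Pm a j
      = (if v = j then 1 else 0) - NInv v q * Pm q j := by
    intro j hj
    have h0 := hE3 j hj
    rw [hDA, Finset.sum_insert hqA] at h0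
    linarith [h0]
  -- K4
  have hK4 : NInv v q = - ∑ a ∈ A, NInv v a * Pm a q := by
    have h0 := hK3 q hqD
    rw [if_neg hvq, hdiagP q, mul_one] at h0
    linarith [h0]
  -- K5
  have hK5 : ∑ a ∈ A, NInv v a * Pm a q = ∑ a ∈ A, PInv v a * Pm a q := by
    calc ∑ a ∈ A, NInv v a * Pm a q
        = ∑ a ∈ A, NInv v a * (∑ a' ∈ A, Pm a a' * H a') := by
          refine Finset.sum_congr rfl fun a ha => ?_
          rw [hK1 a ha]
      _ = ∑ a' ∈ A, (∑ a ∈ A, NInv v a * Pm a a') * H a' := by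
          simp only [Finset.mul_sum]
          rw [Finset.sum_comm]
          refine Finset.sum_congr rfl fun a' _ => ?_
          rw [Finset.sum_mul]
          exact Finset.sum_congr rfl fun a _ => by ring
      _ = ∑ a' ∈ A, ((if v = a' then 1 else 0) - NInv v q * Pm q a') * H a' := by
          refine Finset.sum_congr rfl fun a' ha' => ?_
          rw [hK3 a' (hAD a' ha')]
      _ = (∑ a' ∈ A, (if v = a' then 1 else 0) * H a')
            - NInv v q * ∑ a' ∈ A, Pm q a' * H a' := by
          rw [Finset.mul_sum, ← Finset.sum_sub_distrib]
          exact Finset.sum_congr rfl fun a' _ => by ring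
      _ = ∑ a ∈ A, PInv v a * Pm a q := by
          rw [hK2, mul_zero, sub_zero]
          simp [Finset.sum_ite_eq, hvA, hHdef]
  -- evaluate Btilde entries
  have hBtA : ∀ (hc : ∀ x : ↥C, (x : V) ∈ A), ∀ c : ↥C,
      Btilde B A ⟨v, hvA⟩ ⟨(c : V), hc c⟩ = - PInv v ↑c := by
    intro hc c
    have hne : (⟨v, hvA⟩ : ↥A) ≠ ⟨(c : V), hc c⟩ := by
      simp only [ne_eq, Subtype.mk_eq_mk]
      intro h
      exact hv (h ▸ c.2)
    simp only [Btilde, Matrix.sub_apply, Matrix.one_apply_ne hne, ← hPm]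
    rw [hPInv_eq ⟨v, hvA⟩ ⟨(c : V), hc c⟩]
    ring
  have hBtD : Btilde B D ⟨v, hvD⟩ ⟨q, hqD⟩ = - NInv v q := by
    have hne : (⟨v, hvD⟩ : ↥D) ≠ ⟨q, hqD⟩ := by
      simp only [ne_eq, Subtype.mk_eq_mk]
      exact hvq
    simp only [Btilde, Matrix.sub_apply, Matrix.one_apply_ne hne, ← hPm]
    rw [hNInv_eq ⟨v, hvD⟩ ⟨q, hqD⟩]
    ring
  -- final assembly
  have hsum : ∑ c : ↥C,
      Btilde B A ⟨v, Finset.mem_insert_self v C⟩ ⟨(c : V), Finset.mem_insert_of_mem c.2⟩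
        * Pm ↑c q = - ∑ c ∈ C, PInv v c * Pm c q := by
    have : ∀ c : ↥C,
        Btilde B A ⟨v, Finset.mem_insert_self v C⟩ ⟨(c : V), Finset.mem_insert_of_mem c.2⟩
          * Pm ↑c q = -(PInv v ↑c * Pm ↑c q) := by
      intro c
      rw [hBtA (fun x => Finset.mem_insert_of_mem x.2) c]
      ring
    rw [Finset.sum_congr rfl fun c _ => this c, Finset.sum_neg_distrib,
      Finset.sum_coe_sort C (fun c => PInv v c * Pm c q)]
  rw [hsum, hBtD, hK4, hK5]
  have hsplit : ∑ a ∈ A, PInv v a * Pm a q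
      = PInv v v * Pm v q + ∑ c ∈ C, PInv v c * Pm c q := by
    rw [hA, Finset.sum_insert hv]
  rw [hsplit, hPInv_vv]
  ring
end

section
/- Let V be a finite set, E ⊆ V × V an acyclic relation, B ∈ ℝ^{V×V} supported on E, and ε an integrable random vector on a probability space; set Y = (I−B)^{-1} ε. Then for every c ∈ V, Y_c = Σ_{s ∈ An(c)} [(I−B)^{-1}]_{cs} ε_s almost surely. Moreover, if v ∈ V is such that the random vector (ε_s)_{s∈An(c)} is independent of ε_v, E[ε_v] = 0, and E[|Y_c ε_v|] < ∞, then Y_c is independent of ε_v and E[Y_c ε_v] = 0. -/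
open Matrix MeasureTheory ProbabilityTheory

open scoped Classical

/-- With `B` supported on an acyclic relation, `ε` integrable, and
`Y = (I−B)⁻¹ ε`: each `Y_c` equals `Σ_{s ∈ An(c)} [(I−B)⁻¹]_{cs} ε_s` almost surely
(where `An(c) = {s | s = c or there is a directed path from s to c}` is the set of `s`
with `Relation.ReflTransGen r s c`); moreover, if `(ε_s)_{s∈An(c)}` is independent of
`ε_v`, `E[ε_v] = 0`, and `E[|Y_c ε_v|] < ∞`, then `Y_c` is independent of `ε_v`
and `E[Y_c ε_v] = 0`. -/
theorem stmt_16 {V : Type*} [Fintype V] [DecidableEq V]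
    (r : V → V → Prop) (hacyc : ∀ v : V, ¬ Relation.TransGen r v v)
    (B : Matrix V V ℝ) (hsupp : ∀ u v : V, B v u ≠ 0 → r u v)
    {Ω : Type*} [MeasureSpace Ω] [IsProbabilityMeasure (volume : Measure Ω)]
    (ε : Ω → V → ℝ)
    (hint : ∀ w : V, Integrable fun ω => ε ω w)
    (Y : Ω → V → ℝ) (hY : ∀ ω, Y ω = (1 - B)⁻¹ *ᵥ ε ω) :
    (∀ c : V, ∀ᵐ ω, Y ω c =
        ∑ s ∈ Finset.univ.filter (fun s => Relation.ReflTransGen r s c),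
          (1 - B)⁻¹ c s * ε ω s) ∧
    ∀ c v : V,
      IndepFun (fun ω => fun s : {s : V // Relation.ReflTransGen r s c} => ε ω (s : V))
        (fun ω => ε ω v) volume →
      (∫ ω, ε ω v) = 0 →
      Integrable (fun ω => Y ω c * ε ω v) →
      IndepFun (fun ω => Y ω c) (fun ω => ε ω v) volume ∧
      (∫ ω, Y ω c * ε ω v) = 0 := by
  set n := Fintype.card V with hn
  set h : V → ℕ := fun v => (Finset.univ.filter (fun u => Relation.TransGen r u v)).card with hh
  have hlt : ∀ u v, r u v → h u < h v := by
    intro u v huv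
    apply Finset.card_lt_card
    constructor
    · intro w hw
      simp only [Finset.mem_filter, Finset.mem_univ, true_and] at hw ⊢
      exact hw.tail huv
    · intro hsub
      have : u ∈ Finset.univ.filter (fun w => Relation.TransGen r w v) := by
        simp [Relation.TransGen.single huv]
      exact hacyc u (by simpa using hsub this)
  have hhb : ∀ v, h v < n := by
    intro v
    have : (Finset.univ.filter (fun u => Relation.TransGen r u v)) ⊆ Finset.univ.erase v := by
      intro w hw
      simp only [Finset.mem_filter, Finset.mem_univ, true_and] at hw
      simp only [Finset.mem_erase, Finset.mem_univ, and_true]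
      rintro rfl; exact hacyc _ hw
    calc h v ≤ (Finset.univ.erase v).card := Finset.card_le_card this
      _ < n := by
        rw [Finset.card_erase_of_mem (Finset.mem_univ v)]
        exact Nat.sub_lt (Fintype.card_pos_iff.mpr ⟨v⟩) one_pos
  -- key lemma on powers
  have hpow : ∀ k : ℕ, ∀ c s : V, (B ^ k) c s ≠ 0 →
      h s + k ≤ h c ∧ Relation.ReflTransGen r s c := by
    intro k
    induction k with
    | zero =>
      intro c s hcs
      simp only [pow_zero, Matrix.one_apply, ne_eq, ite_eq_right_iff, not_forall] at hcs
      obtain ⟨rfl, -⟩ := hcs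
      exact ⟨by omega, Relation.ReflTransGen.refl⟩
    | succ k ih =>
      intro c s hcs
      rw [pow_succ, Matrix.mul_apply] at hcs
      obtain ⟨u, -, hu⟩ := Finset.exists_ne_zero_of_sum_ne_zero hcs
      have h1 : (B ^ k) c u ≠ 0 := fun h0 => hu (by simp [h0])
      have h2 : B u s ≠ 0 := fun h0 => hu (by simp [h0])
      have hr := hsupp s u h2
      obtain ⟨hle, hpath⟩ := ih c u h1
      exact ⟨by have := hlt s u hr; omega, Relation.ReflTransGen.head hr hpath⟩
  have hBn : B ^ n = 0 := by
    ext c s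
    by_contra hcs
    obtain ⟨hle, -⟩ := hpow n c s hcs
    have := hhb c
    omega
  have hinv : (1 - B)⁻¹ = ∑ i ∈ Finset.range n, B ^ i := by
    apply Matrix.inv_eq_right_inv
    have := mul_geom_sum B n
    have h1 : (1 - B) * ∑ i ∈ Finset.range n, B ^ i
        = -((B - 1) * ∑ i ∈ Finset.range n, B ^ i) := by rw [← neg_mul, neg_sub]
    rw [h1, this, hBn]; simp
  have hzero : ∀ c s : V, ¬ Relation.ReflTransGen r s c → (1 - B)⁻¹ c s = 0 := by
    intro c s hns
    rw [hinv]
    rw [Matrix.sum_apply]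
    apply Finset.sum_eq_zero
    intro i _
    by_contra h0
    exact hns (hpow i c s h0).2
  have hYc : ∀ c : V, ∀ ω, Y ω c =
      ∑ s ∈ Finset.univ.filter (fun s => Relation.ReflTransGen r s c),
        (1 - B)⁻¹ c s * ε ω s := by
    intro c ω
    rw [hY ω]
    show ∑ s, (1 - B)⁻¹ c s * ε ω s = _
    symm
    apply Finset.sum_filter_of_ne
    intro s _ hne
    by_contra hns
    exact hne (by rw [hzero c s hns, zero_mul])
  refine ⟨fun c => Filter.Eventually.of_forall (hYc c), ?_⟩
  intro c v hindep hmean hintmul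
  -- express Y c as a function of the subvector
  set φ : ({s : V // Relation.ReflTransGen r s c} → ℝ) → ℝ :=
    fun x => ∑ s : {s : V // Relation.ReflTransGen r s c}, (1 - B)⁻¹ c (s : V) * x s with hφ
  have hφmeas : Measurable φ := by
    apply Finset.measurable_sum
    intro s _
    exact (measurable_pi_apply s).const_mul _
  have hcomp : (fun ω => Y ω c) = φ ∘
      (fun ω => fun s : {s : V // Relation.ReflTransGen r s c} => ε ω (s : V)) := by
    funext ω
    rw [hYc c ω]
    simp only [Function.comp_apply, hφ]
    exact Finset.sum_subtype _ (by simp) _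
  have hind2 : IndepFun (fun ω => Y ω c) (fun ω => ε ω v) volume := by
    rw [hcomp]
    exact hindep.comp hφmeas measurable_id
  refine ⟨hind2, ?_⟩
  have hYint : Integrable (fun ω => Y ω c) := by
    have : (fun ω => Y ω c) = fun ω =>
        ∑ s ∈ Finset.univ.filter (fun s => Relation.ReflTransGen r s c),
          (1 - B)⁻¹ c s * ε ω s := funext (hYc c)
    rw [this]
    exact integrable_finset_sum _ fun s _ => (hint s).const_mul _
  calc ∫ ω, Y ω c * ε ω v = (∫ ω, Y ω c) * ∫ ω, ε ω v :=
        hind2.integral_fun_mul_eq_mul_integral hYint.aestronglyMeasurable (hint v).aestronglyMeasurable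
    _ = 0 := by rw [hmean, mul_zero]
end
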